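/- arXiv:1905.07804 — 7 statements merged into one kernel-verified Lean document; each statement's English description precedes it below -/
import Mathlib

section
/- Let Q be an m×m real symmetric invertible matrix and A an arbitrary m×m real matrix. Define D(M) := −M − Mᵀ + M Q Mᵀ for an m×m matrix M. Then D(A) = D(2Q⁻¹ − A). Consequently, the perturbed covariance functions coincide: G₀(x,y) + ψ(x)ᵀ D(A) ψ(y) = G₀(x,y) + ψ(x)ᵀ D(2Q⁻¹ − A) ψ(y), so the Gaussian functions X_A and X_{2Q⁻¹−A} have the same covariance and hence the same distribution. -/
open Matrix

/-- For a symmetric invertible matrix `Q` and `D(M) = -M - Mᵀ + M Q Mᵀ`, one has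
`D(A) = D(2Q⁻¹ - A)`; consequently the perturbed covariances built from `D(A)` and
`D(2Q⁻¹ - A)` coincide, so `X_A` and `X_{2Q⁻¹ - A}` are equidistributed. -/
theorem perturbation_symmetry
    {m : ℕ} (Q A : Matrix (Fin m) (Fin m) ℝ)
    (hQsym : Q.IsSymm) (hQinv : IsUnit Q.det)
    (D : Matrix (Fin m) (Fin m) ℝ → Matrix (Fin m) (Fin m) ℝ)
    (hD : ∀ M, D M = -M - Mᵀ + M * Q * Mᵀ)
    {α : Type*} (O : Set α) (G₀ : α → α → ℝ) (ψ : Fin m → α → ℝ) :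
    D A = D (2 • Q⁻¹ - A) ∧
    ∀ x ∈ O, ∀ y ∈ O,
      G₀ x y + dotProduct (fun i => ψ i x) ((D A).mulVec (fun j => ψ j y)) =
        G₀ x y +
          dotProduct (fun i => ψ i x)
            ((D (2 • Q⁻¹ - A)).mulVec (fun j => ψ j y)) := by
  have hinvsym : Q⁻¹ᵀ = Q⁻¹ := by
    rw [Matrix.transpose_nonsing_inv, hQsym.eq]
  have h1 : Q⁻¹ * Q = 1 := Matrix.nonsing_inv_mul Q hQinv
  have h2 : Q * Q⁻¹ = 1 := Matrix.mul_nonsing_inv Q hQinv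
  have key : D A = D (2 • Q⁻¹ - A) := by
    rw [hD, hD]
    rw [Matrix.transpose_sub, Matrix.transpose_smul, hinvsym]
    simp only [sub_mul, mul_sub, smul_mul_assoc, mul_smul_comm, ← mul_assoc, h1, h2, one_mul, mul_one]
    rw [mul_assoc A Q Q⁻¹, h2, mul_one]
    abel
  exact ⟨key, fun x _ y _ => by rw [key]⟩
end

section
/- Suppose φ_j ∈ L²(O) for all j, Q is symmetric and invertible, and A = Q⁻¹ (so that D = −A − Aᵀ + A Q Aᵀ = −Q⁻¹). Define the perturbed kernel G_A(x,y) := G₀(x,y) + ψ(x)ᵀ D ψ(y). Then for every j = 1,…,m and a.e. x ∈ O, ∫_O G_A(x,y)φ_j(y) dy = 0; that is, the integral operator with kernel G_A annihilates each φ_j, so φ₁,…,φ_m are eigenfunctions corresponding to the zero eigenvalue (of multiplicity m). -/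
open MeasureTheory Matrix

/-- In the critical case `A = Q⁻¹` (so `D = -Q⁻¹`), the integral operator with the perturbed
kernel `G_A(x,y) = G₀(x,y) + ψ(x)ᵀ D ψ(y)` annihilates each `φ_j`: the `φ_j` are
eigenfunctions with zero eigenvalue. -/
theorem critical_kernel_annihilates
    {d m : ℕ} (O : Set (Fin d → ℝ)) (hO : IsOpen O) (hObdd : Bornology.IsBounded O)
    (G₀ : (Fin d → ℝ) → (Fin d → ℝ) → ℝ)
    (hG₀meas : Measurable (Function.uncurry G₀)) (hG₀sym : ∀ x y, G₀ x y = G₀ y x)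
    (φ : Fin m → (Fin d → ℝ) → ℝ)
    (hφL2 : ∀ j, MemLp (φ j) 2 (volume.restrict O))
    (hφind : LinearIndependent ℝ φ)
    (ψ : Fin m → (Fin d → ℝ) → ℝ)
    (hψ : ∀ j, ∀ᵐ x ∂(volume.restrict O),
      Integrable (fun y => G₀ x y * φ j y) (volume.restrict O) ∧
        ψ j x = ∫ y in O, G₀ x y * φ j y)
    (Q : Matrix (Fin m) (Fin m) ℝ)
    (hQint : ∀ i j, Integrable (fun x => ψ i x * φ j x) (volume.restrict O))
    (hQ : ∀ i j, Q i j = ∫ x in O, ψ i x * φ j x)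
    (hQsym : Q.IsSymm) (hQinv : IsUnit Q.det)
    (GA : (Fin d → ℝ) → (Fin d → ℝ) → ℝ)
    (hGA : ∀ x y, GA x y =
      G₀ x y + dotProduct (fun i => ψ i x) ((-Q⁻¹).mulVec (fun j => ψ j y))) :
    ∀ j, ∀ᵐ x ∂(volume.restrict O), ∫ y in O, GA x y * φ j y = 0 := by
  intro j
  filter_upwards [hψ j] with x hx
  obtain ⟨hint, hψx⟩ := hx
  set c : Matrix (Fin m) (Fin m) ℝ := -Q⁻¹ with hc
  have hterm : ∀ i k, Integrable (fun y => (ψ i x * c i k) * (ψ k y * φ j y))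
      (volume.restrict O) := fun i k => (hQint k j).const_mul _
  have hsum : Integrable (fun y => ∑ i, ∑ k, (ψ i x * c i k) * (ψ k y * φ j y))
      (volume.restrict O) :=
    integrable_finset_sum _ (fun i _ => integrable_finset_sum _ (fun k _ => hterm i k))
  have heq : ∀ y, GA x y * φ j y =
      G₀ x y * φ j y + ∑ i, ∑ k, (ψ i x * c i k) * (ψ k y * φ j y) := by
    intro y
    rw [hGA]
    simp only [dotProduct, Matrix.mulVec, add_mul]
    congr 1
    rw [Finset.sum_mul]
    refine Finset.sum_congr rfl fun i _ => ?_
    rw [Finset.mul_sum, Finset.sum_mul]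
    exact Finset.sum_congr rfl fun k _ => by ring
  have hinv : Q⁻¹ * Q = 1 := Matrix.nonsing_inv_mul Q hQinv
  have key : ∑ i, ∑ k, (ψ i x * c i k) * Q k j = - ψ j x := by
    have h1 : ∀ i, ∑ k, (ψ i x * c i k) * Q k j = ψ i x * ((c * Q) i j) := by
      intro i
      rw [Matrix.mul_apply, Finset.mul_sum]
      exact Finset.sum_congr rfl fun k _ => by ring
    simp_rw [h1, hc, Matrix.neg_mul, hinv]
    simp [Matrix.one_apply]
  calc ∫ y in O, GA x y * φ j y
      = ∫ y in O, (G₀ x y * φ j y + ∑ i, ∑ k, (ψ i x * c i k) * (ψ k y * φ j y)) := by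
        simp_rw [heq]
    _ = (∫ y in O, G₀ x y * φ j y)
          + ∫ y in O, ∑ i, ∑ k, (ψ i x * c i k) * (ψ k y * φ j y) :=
        integral_add hint hsum
    _ = ψ j x + ∑ i, ∑ k, (ψ i x * c i k) * Q k j := by
        rw [← hψx]
        congr 1
        rw [integral_finset_sum _ (fun i _ => integrable_finset_sum _ fun k _ => hterm i k)]
        refine Finset.sum_congr rfl fun i _ => ?_
        rw [integral_finset_sum _ (fun k _ => hterm i k)]
        refine Finset.sum_congr rfl fun k _ => ?_
        rw [MeasureTheory.integral_const_mul, hQ k j]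
    _ = 0 := by rw [key]; ring
end

section
/- (Theorem 4, Durbin's processes are critical.) Let ψ₁,…,ψ_m : [0,1] → ℝ be C² functions with ψ_j(0) = ψ_j(1) = 0 for all j, and set φ_j := −ψ_j''. Then: (a) for every t ∈ [0,1], ∫₀¹ (min(s,t) − s·t)·φ_j(s) ds = ψ_j(t), i.e. ψ_j is the image of φ_j under the integral operator with the Brownian-bridge covariance kernel G_B(s,t) = min(s,t) − s·t; and (b) Q_{ij} := ∫₀¹ ψ_j(s)·φ_i(s) ds = ∫₀¹ ψ_i'(s)·ψ_j'(s) ds = S_{ij}, where S is the matrix with entries S_{ij} = ∫₀¹ ψ_i'ψ_j' ds. Consequently Q = S, so the Durbin process with covariance G_B(s,t) − ψ(s)ᵀ S⁻¹ ψ(t) is the perturbation X_A of the Brownian bridge with A = Q⁻¹, i.e. a critical perturbation. -/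
open MeasureTheory Matrix intervalIntegral

section Aux

variable {f : ℝ → ℝ}

private lemma aux_diff (h : ContDiff ℝ 2 f) : Differentiable ℝ f :=
  h.differentiable (by norm_num)

private lemma aux_cd1 (h : ContDiff ℝ 2 f) : ContDiff ℝ 1 (deriv f) := by
  rw [show ((2:WithTop ℕ∞)) = 1 + 1 from rfl] at h
  exact (contDiff_succ_iff_deriv.mp h).2.2

private lemma aux_diff' (h : ContDiff ℝ 2 f) : Differentiable ℝ (deriv f) :=
  (aux_cd1 h).differentiable one_ne_zero

private lemma aux_cont'' (h : ContDiff ℝ 2 f) : Continuous (deriv (deriv f)) := by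
  exact (contDiff_one_iff_deriv.mp (aux_cd1 h)).2

/-- ∫_a^b s * f'' = b f'(b) - a f'(a) - (f b - f a). -/
private lemma aux_ibp_id (h : ContDiff ℝ 2 f) (a b : ℝ) :
    ∫ s in a..b, s * deriv (deriv f) s
      = b * deriv f b - a * deriv f a - (f b - f a) := by
  have key := intervalIntegral.integral_mul_deriv_eq_deriv_mul
    (u := fun s : ℝ => s) (u' := fun _ => (1:ℝ)) (v := deriv f) (v' := deriv (deriv f))
    (fun x _ => hasDerivAt_id x)
    (fun x _ => (aux_diff' h x).hasDerivAt)
    (intervalIntegrable_const)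
    ((aux_cont'' h).intervalIntegrable a b)
  rw [key, intervalIntegral.integral_congr (g := deriv f) (fun x _ => one_mul _),
    intervalIntegral.integral_deriv_eq_sub (fun x _ => aux_diff h x)
      ((aux_cd1 h).continuous.intervalIntegrable a b)]

/-- ∫_a^b (1-s) * f'' = (1-b) f'(b) - (1-a) f'(a) + (f b - f a). -/
private lemma aux_ibp_one_sub (h : ContDiff ℝ 2 f) (a b : ℝ) :
    ∫ s in a..b, (1 - s) * deriv (deriv f) s
      = (1 - b) * deriv f b - (1 - a) * deriv f a + (f b - f a) := by
  have key := intervalIntegral.integral_mul_deriv_eq_deriv_mul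
    (u := fun s : ℝ => 1 - s) (u' := fun _ => (-1:ℝ)) (v := deriv f) (v' := deriv (deriv f))
    (fun x _ => by simpa using (hasDerivAt_id x).const_sub 1)
    (fun x _ => (aux_diff' h x).hasDerivAt)
    (intervalIntegrable_const)
    ((aux_cont'' h).intervalIntegrable a b)
  rw [key, intervalIntegral.integral_congr (g := fun s => -(deriv f s))
      (fun x _ => by ring),
    intervalIntegral.integral_neg,
    intervalIntegral.integral_deriv_eq_sub (fun x _ => aux_diff h x)
      ((aux_cd1 h).continuous.intervalIntegrable a b)]
  ring

end Aux

/-- **Theorem 4 (Durbin's processes are critical perturbations of Brownian bridge).**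
If `ψ_j` are `C²` with `ψ_j(0) = ψ_j(1) = 0` and `φ_j = -ψ_j''`, then
(a) `∫₀¹ (min(s,t) - st) φ_j(s) ds = ψ_j(t)`, so `ψ_j` is the image of `φ_j` under the
Brownian-bridge covariance operator; and
(b) `Q_{ij} = ∫₀¹ ψ_j φ_i = ∫₀¹ ψ_i' ψ_j' = S_{ij}`, i.e. `Q = S`, so the Durbin process,
whose covariance is `G_B(s,t) - ψ(s)ᵀ S⁻¹ ψ(t)`, is the perturbation with `A = Q⁻¹`, a
critical perturbation. -/
theorem durbin_is_critical
    {m : ℕ} (ψ : Fin m → ℝ → ℝ)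
    (hψC2 : ∀ j, ContDiff ℝ 2 (ψ j))
    (hψ0 : ∀ j, ψ j 0 = 0) (hψ1 : ∀ j, ψ j 1 = 0)
    (φ : Fin m → ℝ → ℝ) (hφ : ∀ j s, φ j s = -(deriv (deriv (ψ j)) s))
    (Q : Matrix (Fin m) (Fin m) ℝ)
    (hQ : ∀ i j, Q i j = ∫ s in (0:ℝ)..1, ψ j s * φ i s)
    (S : Matrix (Fin m) (Fin m) ℝ)
    (hS : ∀ i j, S i j = ∫ s in (0:ℝ)..1, deriv (ψ i) s * deriv (ψ j) s) :
    (∀ j, ∀ t ∈ Set.Icc (0:ℝ) 1,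
      ∫ s in (0:ℝ)..1, (min s t - s * t) * φ j s = ψ j t) ∧
    Q = S := by
  constructor
  · -- part (a)
    intro j t ht
    obtain ⟨ht0, ht1⟩ := ht
    have hcφ : Continuous (φ j) := by
      have : φ j = fun s => -(deriv (deriv (ψ j)) s) := funext (hφ j)
      rw [this]; exact (aux_cont'' (hψC2 j)).neg
    have hker : Continuous fun s : ℝ => (min s t - s * t) * φ j s :=
      (((continuous_id.min continuous_const).sub
        (continuous_id.mul continuous_const)).mul hcφ)
    -- split at t
    have hsplit : ∫ s in (0:ℝ)..1, (min s t - s * t) * φ j s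
        = (∫ s in (0:ℝ)..t, (min s t - s * t) * φ j s)
          + ∫ s in t..1, (min s t - s * t) * φ j s := by
      rw [intervalIntegral.integral_add_adjacent_intervals
        (hker.intervalIntegrable 0 t) (hker.intervalIntegrable t 1)]
    have h1 : ∫ s in (0:ℝ)..t, (min s t - s * t) * φ j s
        = -(1 - t) * ∫ s in (0:ℝ)..t, s * deriv (deriv (ψ j)) s := by
      rw [← intervalIntegral.integral_const_mul]
      apply intervalIntegral.integral_congr
      intro x hx
      rw [Set.uIcc_of_le ht0] at hx
      have hmin : min x t = x := min_eq_left hx.2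
      simp only [hφ, hmin]; ring
    have h2 : ∫ s in t..(1:ℝ), (min s t - s * t) * φ j s
        = -t * ∫ s in t..(1:ℝ), (1 - s) * deriv (deriv (ψ j)) s := by
      rw [← intervalIntegral.integral_const_mul]
      apply intervalIntegral.integral_congr
      intro x hx
      rw [Set.uIcc_of_le ht1] at hx
      have hmin : min x t = t := min_eq_right hx.1
      simp only [hφ, hmin]; ring
    rw [hsplit, h1, h2, aux_ibp_id (hψC2 j) 0 t, aux_ibp_one_sub (hψC2 j) t 1,
      hψ0 j, hψ1 j]
    ring
  · -- part (b)
    ext i j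
    rw [hQ, hS]
    have key := intervalIntegral.integral_mul_deriv_eq_deriv_mul
      (u := ψ j) (u' := deriv (ψ j)) (v := deriv (ψ i)) (v' := deriv (deriv (ψ i)))
      (a := 0) (b := 1)
      (fun x _ => (aux_diff (hψC2 j) x).hasDerivAt)
      (fun x _ => (aux_diff' (hψC2 i) x).hasDerivAt)
      ((aux_cd1 (hψC2 j)).continuous.intervalIntegrable 0 1)
      ((aux_cont'' (hψC2 i)).intervalIntegrable 0 1)
    have hrw : ∫ s in (0:ℝ)..1, ψ j s * φ i s
        = -∫ s in (0:ℝ)..1, ψ j s * deriv (deriv (ψ i)) s := by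
      rw [← intervalIntegral.integral_neg]
      apply intervalIntegral.integral_congr
      intro x _
      simp only [hφ]; ring
    rw [hrw, key, hψ0 j, hψ1 j]
    have : ∫ s in (0:ℝ)..1, deriv (ψ j) s * deriv (ψ i) s
        = ∫ s in (0:ℝ)..1, deriv (ψ i) s * deriv (ψ j) s :=
      intervalIntegral.integral_congr (fun x _ => mul_comm _ _)
    rw [← this]
    ring
end

section
/- (Tauberian lemma on differentiating asymptotics.) Let f : [0,∞) → ℝ be differentiable with f' non-decreasing, and suppose f(x) ∼ 𝒜·x^α·L(x)·exp(−𝒟 x^{−β}) as x → 0⁺, where α ∈ ℝ, 𝒜 > 0, β > 0, 𝒟 > 0, and L is a positive function slowly varying at zero (which may be assumed to have the Karamata form L(x) = exp(∫_B^x η(y)/y dy) with η(y) → 0, so that x·L'(x)/L(x) → 0 as x → 0⁺). Then f'(x) ∼ 𝒜·𝒟β·x^{α−β−1}·L(x)·exp(−𝒟 x^{−β}) as x → 0⁺. -/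
open Filter

open Real Set Topology

section TauberianAux


lemma aux_rpow0 {β : ℝ} (hβ : 0 < β) :
    Tendsto (fun x : ℝ => x ^ β) (𝓝[>] (0:ℝ)) (𝓝 0) := by
  have h := (Real.continuousAt_rpow_const 0 β (Or.inr hβ.le)).tendsto
  rw [Real.zero_rpow hβ.ne'] at h
  exact h.mono_left nhdsWithin_le_nhds

lemma aux_ev_small {β : ℝ} (hβ : 0 < β) (c ε : ℝ) (hε : 0 < ε) :
    ∀ᶠ x in 𝓝[>] (0:ℝ), |c * x ^ β| < ε := by
  have h : Tendsto (fun x : ℝ => c * x ^ β) (𝓝[>] (0:ℝ)) (𝓝 0) := by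
    simpa using (aux_rpow0 hβ).const_mul c
  have := Metric.tendsto_nhds.mp h ε hε
  simpa [Real.dist_eq, abs_mul] using this

lemma aux_ev_lt {b : ℝ} (hb : 0 < b) : ∀ᶠ x in 𝓝[>] (0:ℝ), x < b := by
  filter_upwards [Ioo_mem_nhdsGT_of_mem (⟨le_rfl, hb⟩ : (0:ℝ) ∈ Set.Ico 0 b)] with x hx
  exact hx.2

lemma aux_ev_pos : ∀ᶠ x in 𝓝[>] (0:ℝ), 0 < x :=
  eventually_mem_nhdsWithin

lemma aux_Lratio (L : ℝ → ℝ) (a : ℝ) (ha : 0 < a)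
    (hLpos : ∀ x ∈ Set.Ioo 0 a, 0 < L x)
    (hLdiff : ∀ x ∈ Set.Ioo (0:ℝ) a, DifferentiableAt ℝ L x)
    (hLslow : Tendsto (fun x => x * deriv L x / L x) (𝓝[>] (0:ℝ)) (𝓝 0))
    {β : ℝ} (hβ : 0 < β) (c : ℝ) :
    Tendsto (fun x => L (x * (1 + c * x ^ β)) / L x) (𝓝[>] (0:ℝ)) (𝓝 1) := by
  set s : ℝ → ℝ := fun x => x * (1 + c * x ^ β) with hs
  -- step 1: log-difference tends to 0
  have hD : Tendsto (fun x => Real.log (L (s x)) - Real.log (L x)) (𝓝[>] (0:ℝ)) (𝓝 0) := by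
    rw [Metric.tendsto_nhds]
    intro ε hε
    obtain ⟨δ, hδ, hδ'⟩ := Metric.tendsto_nhdsWithin_nhds.mp hLslow ε hε
    filter_upwards [aux_ev_pos, aux_ev_small hβ c (1/2) (by norm_num),
      aux_ev_lt (show (0:ℝ) < 2/3 * min δ a from by positivity)] with x hx hsm hxs
    -- basic bounds
    have hu1 : -(1/2 : ℝ) < c * x ^ β := (abs_lt.mp hsm).1
    have hu2 : c * x ^ β < 1/2 := (abs_lt.mp hsm).2
    have hxb : (0:ℝ) < x ^ β := Real.rpow_pos_of_pos hx β
    have habs : |c| * x ^ β = |c * x ^ β| := by rw [abs_mul, abs_of_pos hxb]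
    have hyx_lo : x / 2 < s x := by
      show x / 2 < x * (1 + c * x ^ β)
      nlinarith [mul_pos hx (show (0:ℝ) < 1/2 + c * x ^ β by linarith)]
    have hyx_hi : s x < 3/2 * x := by
      show x * (1 + c * x ^ β) < 3/2 * x
      nlinarith [mul_pos hx (show (0:ℝ) < 1/2 - c * x ^ β by linarith)]
    have hxδ : (3:ℝ)/2 * x < min δ a := by linarith [hxs]
    have hxδ1 : (3:ℝ)/2 * x < δ := lt_of_lt_of_le hxδ (min_le_left _ _)
    have hxδ2 : (3:ℝ)/2 * x < a := lt_of_lt_of_le hxδ (min_le_right _ _)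
    -- every point of the relevant interval is fine
    have key : ∀ t : ℝ, x/2 < t → t ≤ 3/2 * x → |t * deriv L t / L t| < ε ∧ t ∈ Set.Ioo (0:ℝ) a := by
      intro t ht1 ht2
      have htpos : 0 < t := lt_trans (by linarith) ht1
      have hta : t < a := lt_of_le_of_lt ht2 hxδ2
      refine ⟨?_, htpos, hta⟩
      have := hδ' (show t ∈ Set.Ioi (0:ℝ) from htpos) (by
        rw [Real.dist_eq, sub_zero, abs_of_pos htpos]
        exact lt_of_le_of_lt ht2 hxδ1)
      rw [Real.dist_eq, sub_zero] at this
      exact this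
    -- the claim: |log L (s x) - log L x| ≤ ε * (2 * |c| * x^β)
    have claim : |Real.log (L (s x)) - Real.log (L x)| ≤ ε * (2 * |c| * x ^ β) := by
      have hmvt : ∀ p q : ℝ, x/2 < p → p < q → q ≤ 3/2*x →
          |Real.log (L q) - Real.log (L p)| ≤ ε * (2/x) * (q - p) := by
        intro p q hp hpq hq
        have hIcc : ∀ t ∈ Set.Icc p q, HasDerivAt (fun t => Real.log (L t)) (deriv L t / L t) t := by
          intro t ht
          have h1 : x/2 < t := lt_of_lt_of_le hp ht.1
          have h2 : t ≤ 3/2*x := le_trans ht.2 hq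
          obtain ⟨-, hta⟩ := key t h1 h2
          exact ((hLdiff t hta).hasDerivAt).log (hLpos t hta).ne'
        obtain ⟨t, ht, hslope⟩ := exists_hasDerivAt_eq_slope (fun t => Real.log (L t))
          (fun t => deriv L t / L t) hpq
          (fun t ht => (hIcc t ht).continuousAt.continuousWithinAt)
          (fun t ht => hIcc t (Set.mem_Icc_of_Ioo ht))
        have htlo : x/2 < t := lt_trans hp ht.1
        have hthi : t ≤ 3/2*x := le_of_lt (lt_of_lt_of_le ht.2 hq)
        obtain ⟨hbound, htmem⟩ := key t htlo hthi
        have htpos : 0 < t := htmem.1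
        have hqp : q - p ≠ 0 := sub_ne_zero_of_ne (ne_of_gt hpq)
        have heq1 : Real.log (L q) - Real.log (L p) = (deriv L t / L t) * (q - p) := by
          rw [hslope, div_mul_cancel₀ _ hqp]
        have heq2 : Real.log (L q) - Real.log (L p)
            = (t * deriv L t / L t) * ((q - p)/t) := by
          have hre : t * deriv L t / L t * ((q - p) / t)
              = (deriv L t / L t * (q - p)) * (t / t) := by ring
          rw [heq1, hre, div_self htpos.ne', mul_one]
        rw [heq2, abs_mul]
        have h1 : |(q - p)/t| ≤ (2/x) * (q-p) := by
          rw [abs_of_nonneg (div_nonneg (by linarith) htpos.le)]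
          have hstep : (q-p)/t ≤ (q-p)/(x/2) := by
            gcongr ?_ / ?_ <;> linarith
          refine le_trans hstep (le_of_eq ?_)
          rw [div_div_eq_mul_div]
          ring
        calc |t * deriv L t / L t| * |(q-p)/t| ≤ ε * ((2/x) * (q-p)) :=
              mul_le_mul (le_of_lt hbound) h1 (abs_nonneg _) (le_of_lt hε)
        _ = ε * (2/x) * (q-p) := by ring
      rcases lt_trichotomy x (s x) with h | h | h
      · have hb := hmvt x (s x) (by linarith) h (le_of_lt hyx_hi)
        have hsx : s x - x = c * x ^ β * x := by show x * (1 + c * x ^ β) - x = _; ring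
        have hcle : c * x ^ β ≤ |c| * x ^ β := by rw [habs]; exact le_abs_self _
        calc |Real.log (L (s x)) - Real.log (L x)| ≤ ε * (2/x) * (s x - x) := hb
        _ = ε * 2 * (c * x ^ β) := by
            rw [hsx]; field_simp
        _ ≤ ε * 2 * (|c| * x ^ β) := by
            exact mul_le_mul_of_nonneg_left hcle (by positivity)
        _ = ε * (2 * |c| * x ^ β) := by ring
      · rw [← h]; simp only [sub_self, abs_zero]; positivity
      · have hb := hmvt (s x) x hyx_lo h (by linarith)
        have hsx : x - s x = -(c * x ^ β) * x := by show x - x * (1 + c * x ^ β) = _; ring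
        have hcle : -(c * x ^ β) ≤ |c| * x ^ β := by rw [habs]; exact neg_le_abs _
        rw [abs_sub_comm]
        calc |Real.log (L x) - Real.log (L (s x))| ≤ ε * (2/x) * (x - s x) := hb
        _ = ε * 2 * (-(c * x ^ β)) := by
            rw [hsx]; field_simp
        _ ≤ ε * 2 * (|c| * x ^ β) := by
            exact mul_le_mul_of_nonneg_left hcle (by positivity)
        _ = ε * (2 * |c| * x ^ β) := by ring
    rw [Real.dist_eq, sub_zero]
    refine lt_of_le_of_lt claim ?_
    have h3 : 2 * |c| * x ^ β < 1 := by
      have h4 : 2 * |c| * x ^ β = 2 * |c * x ^ β| := by rw [mul_assoc, habs]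
      rw [h4]; linarith
    calc ε * (2 * |c| * x ^ β) < ε * 1 := by
          apply mul_lt_mul_of_pos_left h3 hε
    _ = ε := mul_one ε
  -- step 2: convert to ratio
  have hexp : Tendsto (fun x => Real.exp (Real.log (L (s x)) - Real.log (L x)))
      (𝓝[>] (0:ℝ)) (𝓝 1) := by
    have := (Real.continuous_exp.tendsto 0).comp hD
    rw [Real.exp_zero] at this; exact this
  refine hexp.congr' ?_
  filter_upwards [aux_ev_pos, aux_ev_small hβ c (1/2) (by norm_num),
    aux_ev_lt (show (0:ℝ) < 2/3 * a from by positivity)] with x hx hsm hxa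
  have hu1 : -(1/2 : ℝ) < c * x ^ β := (abs_lt.mp hsm).1
  have hspos : 0 < s x := mul_pos hx (by linarith)
  have hsa : s x < a := by
    have hu2 : c * x ^ β < 1/2 := (abs_lt.mp hsm).2
    have : s x < x * (3/2) := mul_lt_mul_of_pos_left (by linarith) hx
    linarith
  have hxa' : x < a := by linarith
  have hL1 : 0 < L (s x) := hLpos _ ⟨hspos, hsa⟩
  have hL2 : 0 < L x := hLpos _ ⟨hx, hxa'⟩
  rw [Real.exp_sub, Real.exp_log hL1, Real.exp_log hL2]

lemma aux_slope_rpow (p : ℝ) :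
    Tendsto (fun t : ℝ => ((1 + t) ^ p - 1) / t) (𝓝[≠] (0:ℝ)) (𝓝 p) := by
  have H : HasDerivAt (fun t : ℝ => (1 + t) ^ p) p 0 := by
    have h1 : HasDerivAt (fun t : ℝ => 1 + t) 1 0 := (hasDerivAt_id 0).const_add 1
    have := h1.rpow_const (p := p) (Or.inl (by norm_num))
    simpa using this
  have h2 := hasDerivAt_iff_tendsto_slope.mp H
  refine h2.congr' ?_
  filter_upwards with t
  simp [slope_def_field, Real.one_rpow]

lemma aux_slope_exp :
    Tendsto (fun t : ℝ => (Real.exp t - 1) / t) (𝓝[≠] (0:ℝ)) (𝓝 1) := by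
  have h2 := hasDerivAt_iff_tendsto_slope.mp (Real.hasDerivAt_exp 0)
  rw [Real.exp_zero] at h2
  refine h2.congr' ?_
  filter_upwards with t
  simp [slope_def_field, Real.exp_zero]

lemma aux_s_tendsto {β : ℝ} (hβ : 0 < β) (c : ℝ) :
    Tendsto (fun x : ℝ => x * (1 + c * x ^ β)) (𝓝[>] (0:ℝ)) (𝓝[>] (0:ℝ)) := by
  apply tendsto_nhdsWithin_of_tendsto_nhds_of_eventually_within
  · have hx : Tendsto (fun x : ℝ => x) (𝓝[>] (0:ℝ)) (𝓝 0) :=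
      tendsto_id.mono_left nhdsWithin_le_nhds
    have h1 : Tendsto (fun x : ℝ => 1 + c * x ^ β) (𝓝[>] (0:ℝ)) (𝓝 1) := by
      have := ((aux_rpow0 hβ).const_mul c).const_add 1
      simpa using this
    simpa using hx.mul h1
  · filter_upwards [aux_ev_pos, aux_ev_small hβ c (1/2) (by norm_num)] with x hx hsm
    have : -(1/2 : ℝ) < c * x ^ β := (abs_lt.mp hsm).1
    have : (0:ℝ) < 1 + c * x ^ β := by linarith
    exact mul_pos hx this

lemma aux_gratio (𝒜 α β 𝒟 : ℝ) (h𝒜 : 0 < 𝒜) (hβ : 0 < β)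
    (L : ℝ → ℝ) (a : ℝ) (ha : 0 < a)
    (hLpos : ∀ x ∈ Set.Ioo 0 a, 0 < L x)
    (hLdiff : ∀ x ∈ Set.Ioo (0:ℝ) a, DifferentiableAt ℝ L x)
    (hLslow : Tendsto (fun x => x * deriv L x / L x) (𝓝[>] (0:ℝ)) (𝓝 0))
    (c : ℝ) (hc : c ≠ 0) :
    Tendsto (fun x =>
      (𝒜 * (x * (1 + c * x ^ β)) ^ α * L (x * (1 + c * x ^ β))
        * Real.exp (-𝒟 * (x * (1 + c * x ^ β)) ^ (-β)))
      / (𝒜 * x ^ α * L x * Real.exp (-𝒟 * x ^ (-β))))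
      (𝓝[>] (0:ℝ)) (𝓝 (Real.exp (𝒟 * β * c))) := by
  -- the three factors
  have h1 : Tendsto (fun x : ℝ => (1 + c * x ^ β) ^ α) (𝓝[>] (0:ℝ)) (𝓝 1) := by
    have hcont := (Real.continuousAt_rpow_const 1 α (Or.inl one_ne_zero)).tendsto
    have hbase : Tendsto (fun x : ℝ => 1 + c * x ^ β) (𝓝[>] (0:ℝ)) (𝓝 1) := by
      have := ((aux_rpow0 hβ).const_mul c).const_add 1
      simpa using this
    have := hcont.comp hbase
    rw [Real.one_rpow] at this; exact this
  have h2 := aux_Lratio L a ha hLpos hLdiff hLslow hβ c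
  -- the exponential factor
  have h3 : Tendsto (fun x : ℝ => Real.exp (-𝒟 * (x ^ (-β) * ((1 + c * x ^ β) ^ (-β) - 1))))
      (𝓝[>] (0:ℝ)) (𝓝 (Real.exp (𝒟 * β * c))) := by
    have hu : Tendsto (fun x : ℝ => c * x ^ β) (𝓝[>] (0:ℝ)) (𝓝[≠] (0:ℝ)) := by
      apply tendsto_nhdsWithin_of_tendsto_nhds_of_eventually_within
      · simpa using (aux_rpow0 hβ).const_mul c
      · filter_upwards [aux_ev_pos] with x hx
        exact mul_ne_zero hc (Real.rpow_pos_of_pos hx β).ne'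
    have hsl := (aux_slope_rpow (-β)).comp hu
    -- inner limit:  x^(-β) * ((1+u)^(-β)-1) = c * (((1+u)^(-β)-1)/u) → c * (-β)
    have hin : Tendsto (fun x : ℝ => x ^ (-β) * ((1 + c * x ^ β) ^ (-β) - 1))
        (𝓝[>] (0:ℝ)) (𝓝 (c * (-β))) := by
      have := hsl.const_mul c
      refine this.congr' ?_
      filter_upwards [aux_ev_pos] with x hx
      have hxb : (0:ℝ) < x ^ β := Real.rpow_pos_of_pos hx β
      show c * (((1 + c * x ^ β) ^ (-β) - 1) / (c * x ^ β))
          = x ^ (-β) * ((1 + c * x ^ β) ^ (-β) - 1)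
      rw [Real.rpow_neg hx.le]
      field_simp
    have := (Real.continuous_exp.tendsto _).comp (hin.const_mul (-𝒟))
    have heq : -𝒟 * (c * (-β)) = 𝒟 * β * c := by ring
    rw [heq] at this
    exact this
  -- combine
  have hall : Tendsto (fun x : ℝ => (1 + c * x ^ β) ^ α
      * (L (x * (1 + c * x ^ β)) / L x)
      * Real.exp (-𝒟 * (x ^ (-β) * ((1 + c * x ^ β) ^ (-β) - 1))))
      (𝓝[>] (0:ℝ)) (𝓝 (Real.exp (𝒟 * β * c))) := by
    have := (h1.mul h2).mul h3
    simpa using this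
  refine hall.congr' ?_
  filter_upwards [aux_ev_pos, aux_ev_small hβ c (1/2) (by norm_num),
    aux_ev_lt (show (0:ℝ) < 2/3 * a from by positivity)] with x hx hsm hxa
  have hu1 : -(1/2 : ℝ) < c * x ^ β := (abs_lt.mp hsm).1
  have hu2 : c * x ^ β < 1/2 := (abs_lt.mp hsm).2
  have hf : (0:ℝ) < 1 + c * x ^ β := by linarith
  have hspos : 0 < x * (1 + c * x ^ β) := mul_pos hx hf
  have hsa : x * (1 + c * x ^ β) < a := by nlinarith
  have hxa' : x < a := by linarith
  have hL1 : 0 < L (x * (1 + c * x ^ β)) := hLpos _ ⟨hspos, hsa⟩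
  have hL2 : 0 < L x := hLpos _ ⟨hx, hxa'⟩
  have hxα : (0:ℝ) < x ^ α := Real.rpow_pos_of_pos hx α
  have hxβ : (0:ℝ) < x ^ (-β) := Real.rpow_pos_of_pos hx (-β)
  have hpow1 : (x * (1 + c * x ^ β)) ^ α = x ^ α * (1 + c * x ^ β) ^ α :=
    Real.mul_rpow hx.le hf.le
  have hpow2 : (x * (1 + c * x ^ β)) ^ (-β) = x ^ (-β) * (1 + c * x ^ β) ^ (-β) :=
    Real.mul_rpow hx.le hf.le
  have hexp : Real.exp (-𝒟 * (x * (1 + c * x ^ β)) ^ (-β))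
      = Real.exp (-𝒟 * x ^ (-β)) * Real.exp (-𝒟 * (x ^ (-β) * ((1 + c * x ^ β) ^ (-β) - 1))) := by
    rw [hpow2, ← Real.exp_add]
    congr 1
    ring
  show (1 + c * x ^ β) ^ α * (L (x * (1 + c * x ^ β)) / L x)
      * Real.exp (-𝒟 * (x ^ (-β) * ((1 + c * x ^ β) ^ (-β) - 1)))
      = _
  rw [hpow1, hexp]
  have hE : (0:ℝ) < Real.exp (-𝒟 * x ^ (-β)) := Real.exp_pos _
  field_simp

end TauberianAux

/-- **Tauberian lemma on differentiating asymptotics.** If `f` is differentiable on `[0,∞)`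
with non-decreasing derivative `f'` and `f(x) ∼ 𝒜 x^α L(x) exp(-𝒟 x^{-β})` as `x → 0⁺`,
where `L` is slowly varying at zero (in Karamata differentiable form, i.e.
`x L'(x)/L(x) → 0`), then `f'(x) ∼ 𝒜 𝒟 β x^{α-β-1} L(x) exp(-𝒟 x^{-β})` as `x → 0⁺`. -/
theorem tauberian_differentiation
    (f f' : ℝ → ℝ)
    (hderiv : ∀ x ∈ Set.Ici (0:ℝ), HasDerivWithinAt f (f' x) (Set.Ici 0) x)
    (hmono : MonotoneOn f' (Set.Ici (0:ℝ)))
    (𝒜 α β 𝒟 : ℝ) (h𝒜 : 0 < 𝒜) (hβ : 0 < β) (h𝒟 : 0 < 𝒟)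
    (L : ℝ → ℝ) (a : ℝ) (ha : 0 < a)
    (hLpos : ∀ x ∈ Set.Ioo 0 a, 0 < L x)
    (hLdiff : ∀ x ∈ Set.Ioo (0:ℝ) a, DifferentiableAt ℝ L x)
    (hLslow : Tendsto (fun x => x * deriv L x / L x) (nhdsWithin 0 (Set.Ioi 0)) (nhds 0))
    (hasymp : Tendsto
      (fun x : ℝ => f x / (𝒜 * x ^ α * L x * Real.exp (-𝒟 * x ^ (-β))))
      (nhdsWithin 0 (Set.Ioi 0)) (nhds 1)) :
    Tendsto
      (fun x : ℝ => f' x /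
        (𝒜 * 𝒟 * β * x ^ (α - β - 1) * L x * Real.exp (-𝒟 * x ^ (-β))))
      (nhdsWithin 0 (Set.Ioi 0)) (nhds 1) := by
  set g : ℝ → ℝ := fun x => 𝒜 * x ^ α * L x * Real.exp (-𝒟 * x ^ (-β)) with hg
  set k : ℝ := 𝒟 * β with hk
  have hkpos : 0 < k := mul_pos h𝒟 hβ
  -- derivative of f at positive points
  have hfd : ∀ t : ℝ, 0 < t → HasDerivAt f (f' t) t := fun t ht =>
    (hderiv t (le_of_lt ht)).hasDerivAt (Ici_mem_nhds ht)
  -- limit of f(s_c x)/g x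
  have hF : ∀ c : ℝ, c ≠ 0 → Tendsto (fun x => f (x * (1 + c * x ^ β)) / g x)
      (𝓝[>] (0:ℝ)) (𝓝 (Real.exp (k * c))) := by
    intro c hc
    have hcomp := hasymp.comp (aux_s_tendsto hβ c)
    have hgr := aux_gratio 𝒜 α β 𝒟 h𝒜 hβ L a ha hLpos hLdiff hLslow c hc
    have hmul := hcomp.mul hgr
    rw [one_mul] at hmul
    rw [show k * c = 𝒟 * β * c by rw [hk]]
    refine hmul.congr' ?_
    filter_upwards [aux_ev_pos, aux_ev_small hβ c (1/2) (by norm_num),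
      aux_ev_lt (show (0:ℝ) < 2/3 * a from by positivity)] with x hx hsm hxa
    have hu1 : -(1/2 : ℝ) < c * x ^ β := (abs_lt.mp hsm).1
    have hu2 : c * x ^ β < 1/2 := (abs_lt.mp hsm).2
    have hf1 : (0:ℝ) < 1 + c * x ^ β := by linarith
    have hspos : 0 < x * (1 + c * x ^ β) := mul_pos hx hf1
    have hsa : x * (1 + c * x ^ β) < a := by nlinarith
    have hgs : 0 < g (x * (1 + c * x ^ β)) := by
      rw [hg]
      have := hLpos _ ⟨hspos, hsa⟩
      positivity
    show f (x * (1 + c * x ^ β)) / g (x * (1 + c * x ^ β))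
        * (g (x * (1 + c * x ^ β)) / g x) = f (x * (1 + c * x ^ β)) / g x
    rw [div_mul_div_comm, mul_comm (f _) (g _), mul_div_mul_left _ _ hgs.ne']
  -- the two-sided eventual bound, for any c > 0
  have hkey : ∀ c : ℝ, 0 < c → ∀ᶠ x in 𝓝[>] (0:ℝ),
      (f x / g x - f (x * (1 + (-c) * x ^ β)) / g x) / (k * c) ≤
        f' x / (𝒜 * 𝒟 * β * x ^ (α - β - 1) * L x * Real.exp (-𝒟 * x ^ (-β))) ∧
      f' x / (𝒜 * 𝒟 * β * x ^ (α - β - 1) * L x * Real.exp (-𝒟 * x ^ (-β))) ≤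
        (f (x * (1 + c * x ^ β)) / g x - f x / g x) / (k * c) := by
    intro c hc
    filter_upwards [aux_ev_pos, aux_ev_small hβ c (1/2) (by norm_num),
      aux_ev_lt (show (0:ℝ) < 2/3 * a from by positivity)] with x hx hsm hxa
    have hu1 : -(1/2 : ℝ) < c * x ^ β := (abs_lt.mp hsm).1
    have hu2 : c * x ^ β < 1/2 := (abs_lt.mp hsm).2
    have hxb : (0:ℝ) < x ^ β := Real.rpow_pos_of_pos hx β
    have hupos : 0 < c * x ^ β := mul_pos hc hxb
    set u : ℝ := c * x ^ β with hu
    set y : ℝ := x * (1 + u) with hy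
    set w : ℝ := x * (1 + (-c) * x ^ β) with hw
    have hw' : w = x * (1 - u) := by rw [hw, hu]; ring
    have hxy : x < y := by rw [hy]; nlinarith
    have hwx : w < x := by rw [hw']; nlinarith
    have hwpos : 0 < w := by rw [hw']; nlinarith
    have hxa' : x < a := by linarith
    have hLx : 0 < L x := hLpos _ ⟨hx, hxa'⟩
    have hgx : 0 < g x := by rw [hg]; positivity
    -- denominator identity
    have hsplit : x ^ (α - β - 1) = x ^ α * x ^ (-β - 1) := by
      rw [show α - β - 1 = α + (-β - 1) by ring, Real.rpow_add hx]
    have hDen : 𝒜 * 𝒟 * β * x ^ (α - β - 1) * L x * Real.exp (-𝒟 * x ^ (-β))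
        = k * x ^ (-β - 1) * g x := by
      rw [hsplit, hg, hk]; ring
    have hDpos : 0 < k * x ^ (-β - 1) * g x := by
      have := Real.rpow_pos_of_pos hx (-β - 1)
      positivity
    -- the power identity
    have hq : x ^ (-β - 1) * (x * u) = c := by
      have e1 : x * x ^ β = x ^ (β + 1) := by
        rw [Real.rpow_add hx, Real.rpow_one]; ring
      have e2 : x ^ (-β - 1) = (x ^ (β + 1))⁻¹ := by
        rw [show (-β - 1 : ℝ) = -(β + 1) by ring, Real.rpow_neg hx.le]
      have e3 : (0:ℝ) < x ^ (β + 1) := Real.rpow_pos_of_pos hx _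
      rw [hu, e2]
      field_simp
      rw [← e1]
    -- MVT bounds
    have hub : f' x ≤ (f y - f x) / (y - x) := by
      obtain ⟨t, ht, hslope⟩ := exists_hasDerivAt_eq_slope f f' hxy
        (fun t ht => (hfd t (lt_of_lt_of_le hx ht.1)).continuousAt.continuousWithinAt)
        (fun t ht => hfd t (lt_trans hx ht.1))
      rw [← hslope]
      exact hmono (le_of_lt hx) (le_of_lt (lt_trans hx ht.1)) (le_of_lt ht.1)
    have hlb : (f x - f w) / (x - w) ≤ f' x := by
      obtain ⟨t, ht, hslope⟩ := exists_hasDerivAt_eq_slope f f' hwx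
        (fun t ht => (hfd t (lt_of_lt_of_le hwpos ht.1)).continuousAt.continuousWithinAt)
        (fun t ht => hfd t (lt_trans hwpos ht.1))
      rw [← hslope]
      exact hmono (le_of_lt (lt_trans hwpos ht.1)) (le_of_lt hx) (le_of_lt ht.2)
    have hyx : y - x = x * u := by rw [hy]; ring
    have hxw : x - w = x * u := by rw [hw']; ring
    have hxu : 0 < x * u := mul_pos hx hupos
    constructor
    · -- lower bound
      rw [hDen]
      have step : (f x - f w) / (x * u) / (k * x ^ (-β - 1) * g x) ≤
          f' x / (k * x ^ (-β - 1) * g x) := by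
        gcongr
        rw [← hxw]; exact hlb
      refine le_trans (le_of_eq ?_) step
      rw [div_sub_div_same, div_div, div_div]
      congr 1
      linear_combination -(k * g x) * hq
    · -- upper bound
      rw [hDen]
      have step : f' x / (k * x ^ (-β - 1) * g x) ≤
          (f y - f x) / (x * u) / (k * x ^ (-β - 1) * g x) := by
        gcongr
        rw [← hyx]; exact hub
      refine le_trans step (le_of_eq ?_)
      rw [div_sub_div_same, div_div, div_div]
      congr 1
      linear_combination (k * g x) * hq
  -- final epsilon argument
  rw [Metric.tendsto_nhds]
  intro ε hε
  -- choose c > 0 with good bounds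
  have hm : Tendsto (fun c : ℝ => k * c) (𝓝[>] (0:ℝ)) (𝓝[>] (0:ℝ)) := by
    apply tendsto_nhdsWithin_of_tendsto_nhds_of_eventually_within
    · have : Tendsto (fun c : ℝ => k * c) (𝓝 (0:ℝ)) (𝓝 (k * 0)) :=
        (continuous_const.mul continuous_id).tendsto 0
      rw [mul_zero] at this
      exact this.mono_left nhdsWithin_le_nhds
    · filter_upwards [aux_ev_pos] with c hc
      exact mul_pos hkpos hc
  have hsub : (𝓝[>] (0:ℝ)) ≤ (𝓝[≠] (0:ℝ)) :=
    nhdsWithin_mono 0 (fun x hx => ne_of_gt hx)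
  have hA : Tendsto (fun c : ℝ => (Real.exp (k * c) - 1) / (k * c)) (𝓝[>] (0:ℝ)) (𝓝 1) :=
    (aux_slope_exp.mono_left hsub).comp hm
  have hB : Tendsto (fun c : ℝ => (1 - Real.exp (-(k * c))) / (k * c)) (𝓝[>] (0:ℝ)) (𝓝 1) := by
    have hneg : Tendsto (fun t : ℝ => -t) (𝓝[>] (0:ℝ)) (𝓝[≠] (0:ℝ)) := by
      apply tendsto_nhdsWithin_of_tendsto_nhds_of_eventually_within
      · have := (continuous_neg (G := ℝ)).tendsto 0
        rw [neg_zero] at this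
        exact this.mono_left nhdsWithin_le_nhds
      · filter_upwards [aux_ev_pos] with t ht
        exact (neg_ne_zero.mpr (ne_of_gt ht))
    have h1 : Tendsto (fun t : ℝ => (1 - Real.exp (-t)) / t) (𝓝[>] (0:ℝ)) (𝓝 1) := by
      have := aux_slope_exp.comp hneg
      refine this.congr' ?_
      filter_upwards with t
      show (Real.exp (-t) - 1) / (-t) = (1 - Real.exp (-t)) / t
      rw [show Real.exp (-t) - 1 = -(1 - Real.exp (-t)) by ring, neg_div_neg_eq]
    exact h1.comp hm
  obtain ⟨c, hcA, hcB, hcpos⟩ :=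
    ((hA.eventually_lt_const (show (1:ℝ) < 1 + ε by linarith)).and
      ((hB.eventually_const_lt (show 1 - ε < (1:ℝ) by linarith)).and aux_ev_pos)).exists
  have hFc := hF c (ne_of_gt hcpos)
  have hFmc := hF (-c) (neg_ne_zero.mpr (ne_of_gt hcpos))
  have hU : Tendsto (fun x => (f (x * (1 + c * x ^ β)) / g x - f x / g x) / (k * c))
      (𝓝[>] (0:ℝ)) (𝓝 ((Real.exp (k * c) - 1) / (k * c))) :=
    (hFc.sub hasymp).div_const _
  have hV : Tendsto (fun x => (f x / g x - f (x * (1 + (-c) * x ^ β)) / g x) / (k * c))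
      (𝓝[>] (0:ℝ)) (𝓝 ((1 - Real.exp (-(k * c))) / (k * c))) := by
    have h0 := (hasymp.sub hFmc).div_const (k * c)
    rw [show k * -c = -(k * c) by ring] at h0
    exact h0
  filter_upwards [hkey c hcpos, hU.eventually_lt_const hcA, hV.eventually_const_lt hcB]
    with x hx1 hx2 hx3
  rw [Real.dist_eq, abs_lt]
  constructor <;> linarith [hx1.1, hx1.2]
end

section
/- Let m ∈ ℕ, μ₁,…,μ_m > 0, and let ξ₁,…,ξ_m be i.i.d. standard normal random variables. Let F(x) = P{Σ_{j=1}^m μ_j ξ_j² < x}. Then for every integer n with 0 ≤ n < m/2 − 1: F is (n+1) times differentiable in a neighborhood of 0 with F^{(n+1)}(0) = 0, there exists a constant C > 0 such that F^{(n+1)}(x) ∼ C·x^{m/2−1−n} as x → 0⁺, and consequently F^{(n)}(x) = o(F^{(n+1)}(x)) as x → 0⁺. -/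
open MeasureTheory ProbabilityTheory Filter

open Finset
open scoped ENNReal NNReal

namespace ChiAux

noncomputable def cS (a : ℝ) (k i : ℕ) : ℝ :=
  (k.choose i : ℝ) * ∏ j ∈ Finset.range (k - i), (a - (j:ℝ))

noncomputable def SS (a : ℝ) (Φ : ℕ → ℝ → ℝ) (k : ℕ) (x : ℝ) : ℝ :=
  ∑ i ∈ Finset.range (k+1), cS a k i * (x ^ i * Φ i x)

noncomputable def SS' (a : ℝ) (Φ : ℕ → ℝ → ℝ) (k : ℕ) (x : ℝ) : ℝ :=
  ∑ i ∈ Finset.range (k+1), cS a k i * ((i:ℝ) * x^(i-1) * Φ i x + x^i * Φ (i+1) x)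

variable {a : ℝ} {Φ : ℕ → ℝ → ℝ}

lemma hasDerivAt_SS (hΦ : ∀ k t, HasDerivAt (Φ k) (Φ (k + 1) t) t) (k : ℕ) (x : ℝ) :
    HasDerivAt (SS a Φ k) (SS' a Φ k x) x := by
  apply HasDerivAt.fun_sum
  intro i _
  exact ((hasDerivAt_pow i x).mul (hΦ i x)).const_mul (cS a k i)

lemma cS_zero (k : ℕ) : cS a (k+1) 0 = (a - k) * cS a k 0 := by
  simp only [cS, Nat.choose_zero_right, Nat.cast_one, one_mul, Nat.sub_zero,
    Finset.prod_range_succ]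
  ring

lemma cS_succ (k i : ℕ) :
    cS a (k+1) (i+1) = (a - k + i + 1) * cS a k (i+1) + cS a k i := by
  rcases Nat.lt_or_ge i (k+1) with hi | hbig
  swap
  · have h1 : (k+1).choose (i+1) = 0 := Nat.choose_eq_zero_of_lt (by omega)
    have h2 : k.choose (i+1) = 0 := Nat.choose_eq_zero_of_lt (by omega)
    have h3 : k.choose i = 0 := Nat.choose_eq_zero_of_lt (by omega)
    simp [cS, h1, h2, h3]
  rcases lt_or_eq_of_le (Nat.lt_succ_iff.mp hi) with h | heq
  · -- i < k
    have h1 : k + 1 - (i + 1) = k - i := by omega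
    have h4 : k - (i + 1) = k - i - 1 := by omega
    have h5 : ((k - i - 1 : ℕ) : ℝ) = (k:ℝ) - (i:ℝ) - 1 := by
      rw [show k - i - 1 = k - (i+1) by omega, Nat.cast_sub (by omega : i + 1 ≤ k)]
      push_cast; ring
    have hq : ∏ j ∈ Finset.range (k - i), (a - (j:ℝ))
        = (∏ j ∈ Finset.range (k - i - 1), (a - (j:ℝ))) * (a - ((k - i - 1 : ℕ) : ℝ)) := by
      rw [show k - i = (k - i - 1) + 1 by omega, Finset.prod_range_succ]
      simp
    rw [cS, cS, cS, h1, h4, Nat.choose_succ_succ, hq, h5]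
    push_cast
    ring
  · subst heq
    have h0 : cS a i (i+1) = 0 := by simp [cS, Nat.choose_succ_self]
    rw [h0]
    simp [cS, Nat.sub_self]

lemma key_identity (k : ℕ) (x : ℝ) :
    SS a Φ (k+1) x = (a - k) * SS a Φ k x + x * SS' a Φ k x := by
  have hterm : ∀ i : ℕ, x * (cS a k i * ((i:ℝ) * x^(i-1) * Φ i x + x^i * Φ (i+1) x))
      = ((i:ℝ) * cS a k i) * (x ^ i * Φ i x) + cS a k i * (x^(i+1) * Φ (i+1) x) := by
    intro i
    cases i with
    | zero => simp; ring
    | succ j =>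
      simp only [Nat.add_sub_cancel]
      push_cast
      ring
  rw [SS', Finset.mul_sum]
  simp only [hterm]
  rw [Finset.sum_add_distrib]
  have e1 : (a - k) * SS a Φ k x + (∑ i ∈ Finset.range (k+1), ((i:ℝ) * cS a k i) * (x ^ i * Φ i x))
      = ∑ i ∈ Finset.range (k+1), ((a - k + i) * cS a k i) * (x ^ i * Φ i x) := by
    rw [SS, Finset.mul_sum, ← Finset.sum_add_distrib]
    apply Finset.sum_congr rfl
    intro i _
    ring
  rw [← add_assoc, e1]
  have expand : ∀ i : ℕ, cS a (k+1) i * (x^i * Φ i x)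
      = ((a - (k:ℝ) + i) * cS a k i) * (x^i * Φ i x)
        + (if i = 0 then 0 else cS a k (i-1) * (x^i * Φ i x)) := by
    intro i
    cases i with
    | zero => rw [if_pos rfl, cS_zero]; push_cast; ring
    | succ j =>
      rw [if_neg (Nat.succ_ne_zero j), Nat.add_sub_cancel,
        cS_succ k j]
      push_cast
      ring
  rw [SS]
  simp only [expand]
  rw [Finset.sum_add_distrib]
  congr 1
  · -- first sums
    rw [Finset.sum_range_succ]
    have hz : cS a k (k+1) = 0 := by simp [cS, Nat.choose_succ_self]
    rw [hz]
    simp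
  · -- shifted sums
    rw [Finset.sum_range_succ' _ (k+1)]
    simp only [Nat.succ_ne_zero, if_false, Nat.add_sub_cancel, if_pos rfl]
    simp

end ChiAux
namespace ChiAux
variable {a : ℝ} {Φ : ℕ → ℝ → ℝ}

noncomputable def GG (a : ℝ) (Φ : ℕ → ℝ → ℝ) (k : ℕ) (x : ℝ) : ℝ :=
  if 0 < x then x ^ (a - k) * SS a Φ k x else 0

lemma continuous_SS (hΦ : ∀ k t, HasDerivAt (Φ k) (Φ (k + 1) t) t) (k : ℕ) :
    Continuous (SS a Φ k) := by
  have : Differentiable ℝ (SS a Φ k) := fun x => (hasDerivAt_SS hΦ k x).differentiableAt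
  exact this.continuous

lemma hasDerivAt_GG_pos (hΦ : ∀ k t, HasDerivAt (Φ k) (Φ (k + 1) t) t) (k : ℕ) {x : ℝ}
    (hx : 0 < x) : HasDerivAt (GG a Φ k) (GG a Φ (k+1) x) x := by
  have h1 : HasDerivAt (fun y => y ^ (a - k) * SS a Φ k y)
      ((a - k) * x ^ (a - (k:ℝ) - 1) * SS a Φ k x + x ^ (a - (k:ℝ)) * SS' a Φ k x) x :=
    (Real.hasDerivAt_rpow_const (Or.inl hx.ne')).mul (hasDerivAt_SS hΦ k x)
  have heq : (a - k) * x ^ (a - (k:ℝ) - 1) * SS a Φ k x + x ^ (a - (k:ℝ)) * SS' a Φ k x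
      = GG a Φ (k+1) x := by
    rw [GG, if_pos hx, key_identity]
    have e1 : x ^ (a - (k:ℝ)) = x ^ (a - (k:ℝ) - 1) * x := by
      rw [← Real.rpow_add_one hx.ne' (a - (k:ℝ) - 1)]; ring_nf
    have e2 : a - ((k:ℕ)+1:ℕ) = a - (k:ℝ) - 1 := by push_cast; ring
    rw [e1, e2]
    ring
  rw [← heq]
  apply HasDerivAt.congr_of_eventuallyEq h1
  filter_upwards [IsOpen.mem_nhds isOpen_Ioi (Set.mem_Ioi.mpr hx)] with y hy
  simp [GG, Set.mem_Ioi.mp hy]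

lemma hasDerivAt_GG_neg (k : ℕ) {x : ℝ} (hx : x < 0) :
    HasDerivAt (GG a Φ k) (GG a Φ (k+1) x) x := by
  have h0 : GG a Φ (k+1) x = 0 := by simp [GG, not_lt.mpr hx.le, lt_asymm hx]
  rw [h0]
  apply HasDerivAt.congr_of_eventuallyEq (hasDerivAt_const x 0)
  filter_upwards [IsOpen.mem_nhds isOpen_Iio (Set.mem_Iio.mpr hx)] with y hy
  simp [GG, lt_asymm (Set.mem_Iio.mp hy)]

lemma hasDerivAt_GG_zero (hΦ : ∀ k t, HasDerivAt (Φ k) (Φ (k + 1) t) t) (k : ℕ)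
    (hk : (k:ℝ) + 1 < a) : HasDerivAt (GG a Φ k) (GG a Φ (k+1) 0) 0 := by
  have h0 : GG a Φ (k+1) 0 = 0 := by simp [GG]
  rw [h0, hasDerivAt_iff_tendsto_slope]
  have hSc : ContinuousAt (SS a Φ k) 0 := (continuous_SS hΦ k).continuousAt
  have hB : ∀ᶠ y in nhds (0:ℝ), |SS a Φ k y| < |SS a Φ k 0| + 1 := by
    have : Tendsto (fun y => |SS a Φ k y|) (nhds 0) (nhds |SS a Φ k 0|) :=
      (continuous_abs.continuousAt).comp hSc
    exact this.eventually_lt_const (by linarith [abs_nonneg (SS a Φ k 0)])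
  have g0 : GG a Φ k 0 = 0 := by simp [GG]
  apply squeeze_zero_norm' (a := fun y => |y| ^ (a - (k:ℝ) - 1) * (|SS a Φ k 0| + 1))
  · filter_upwards [nhdsWithin_le_nhds hB] with y hy
    rcases lt_or_ge 0 y with hy0 | hy0
    · have hsl : slope (GG a Φ k) 0 y = y ^ (a - (k:ℝ) - 1) * SS a Φ k y := by
        rw [slope_def_field, g0, sub_zero, sub_zero, GG, if_pos hy0,
          show a - (k:ℝ) = (a - (k:ℝ) - 1) + 1 by ring, Real.rpow_add_one hy0.ne']
        field_simp
        ring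
      rw [hsl, Real.norm_eq_abs, abs_mul]
      have h1 : |y ^ (a - (k:ℝ) - 1)| = |y| ^ (a - (k:ℝ) - 1) := by
        rw [abs_of_nonneg (Real.rpow_nonneg hy0.le _), abs_of_pos hy0]
      rw [h1]
      exact mul_le_mul_of_nonneg_left hy.le (by positivity)
    · have hsl : slope (GG a Φ k) 0 y = 0 := by
        rw [slope_def_field, g0, sub_zero, sub_zero, GG, if_neg (not_lt.mpr hy0), zero_div]
      rw [hsl, norm_zero]
      positivity
  · have h1 : Tendsto (fun y : ℝ => |y| ^ (a - (k:ℝ) - 1)) (nhds 0) (nhds 0) := by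
      have hc : ContinuousAt (fun t : ℝ => t ^ (a - (k:ℝ) - 1)) 0 :=
        Real.continuousAt_rpow_const 0 _ (Or.inr (by linarith))
      have : Tendsto (fun t : ℝ => t ^ (a - (k:ℝ) - 1)) (nhds 0) (nhds ((0:ℝ) ^ (a - (k:ℝ) - 1))) := hc
      rw [Real.zero_rpow (by linarith : a - (k:ℝ) - 1 ≠ 0)] at this
      exact this.comp (continuous_abs.tendsto' 0 0 abs_zero)
    have := h1.mul_const (|SS a Φ k 0| + 1)
    rw [zero_mul] at this
    exact this.mono_left nhdsWithin_le_nhds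

lemma hasDerivAt_GG (hΦ : ∀ k t, HasDerivAt (Φ k) (Φ (k + 1) t) t) (k : ℕ)
    (hk : (k:ℝ) + 1 < a) (x : ℝ) : HasDerivAt (GG a Φ k) (GG a Φ (k+1) x) x := by
  rcases lt_trichotomy x 0 with h | h | h
  · exact hasDerivAt_GG_neg k h
  · subst h; exact hasDerivAt_GG_zero hΦ k hk
  · exact hasDerivAt_GG_pos hΦ k h

end ChiAux
namespace ChiAux

theorem analysis_main (a : ℝ) (n : ℕ) (hn : (n : ℝ) + 1 < a)
    (Φ : ℕ → ℝ → ℝ) (hΦ : ∀ k t, HasDerivAt (Φ k) (Φ (k + 1) t) t)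
    (hΦ0 : 0 < Φ 0 0)
    (F : ℝ → ℝ) (hFpos : ∀ x : ℝ, 0 < x → F x = x ^ a * Φ 0 x)
    (hFneg : ∀ x : ℝ, x ≤ 0 → F x = 0) :
    (∀ k, k ≤ n → ∀ x : ℝ, DifferentiableAt ℝ (iteratedDeriv k F) x) ∧
    iteratedDeriv (n + 1) F 0 = 0 ∧
    (∃ C > (0:ℝ), Tendsto
      (fun x : ℝ => iteratedDeriv (n + 1) F x / (C * x ^ (a - 1 - (n:ℝ))))
      (nhdsWithin 0 (Set.Ioi 0)) (nhds 1)) ∧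
    Tendsto (fun x => iteratedDeriv n F x / iteratedDeriv (n + 1) F x)
      (nhdsWithin 0 (Set.Ioi 0)) (nhds 0) := by
  have hF0 : F = GG a Φ 0 := by
    funext x
    rcases lt_or_ge 0 x with hx | hx
    · rw [hFpos x hx, GG, if_pos hx]
      simp [SS, cS]
    · rw [hFneg x hx, GG, if_neg (not_lt.mpr hx)]
  have hstep : ∀ k : ℕ, k ≤ n → ∀ x, HasDerivAt (GG a Φ k) (GG a Φ (k+1) x) x := by
    intro k hk x
    refine hasDerivAt_GG hΦ k ?_ x
    have : (k:ℝ) ≤ n := by exact_mod_cast hk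
    linarith
  have hiter : ∀ k : ℕ, k ≤ n + 1 → iteratedDeriv k F = GG a Φ k := by
    intro k
    induction k with
    | zero => intro _; rw [iteratedDeriv_zero]; exact hF0
    | succ k ih =>
      intro hk
      rw [iteratedDeriv_succ, ih (by omega)]
      funext x
      exact (hstep k (by omega) x).deriv
  -- value of SS at 0
  have hSS0 : ∀ k : ℕ, SS a Φ k 0 = cS a k 0 * Φ 0 0 := by
    intro k
    rw [SS, Finset.sum_eq_single_of_mem 0 (Finset.mem_range.mpr (by omega))]
    · simp
    · intro b _ hb
      simp [zero_pow hb]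
  have hcSpos : ∀ k : ℕ, k ≤ n + 1 → 0 < cS a k 0 := by
    intro k hk
    rw [cS]
    simp only [Nat.choose_zero_right, Nat.cast_one, one_mul, Nat.sub_zero]
    apply Finset.prod_pos
    intro j hj
    have hj' : (j:ℝ) ≤ n := by
      have : j ≤ n := by
        have := Finset.mem_range.mp hj; omega
      exact_mod_cast this
    linarith
  have hSpos : ∀ k : ℕ, k ≤ n + 1 → 0 < SS a Φ k 0 := by
    intro k hk
    rw [hSS0 k]
    exact mul_pos (hcSpos k hk) hΦ0
  refine ⟨?_, ?_, ?_, ?_⟩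
  · intro k hk x
    rw [hiter k (by omega)]
    exact (hstep k hk x).differentiableAt
  · rw [hiter (n+1) le_rfl]
    simp [GG]
  · refine ⟨SS a Φ (n+1) 0, hSpos (n+1) le_rfl, ?_⟩
    have hT : Tendsto (fun x => SS a Φ (n+1) x / SS a Φ (n+1) 0)
        (nhdsWithin 0 (Set.Ioi 0)) (nhds (SS a Φ (n+1) 0 / SS a Φ (n+1) 0)) :=
      (((continuous_SS hΦ (n+1)).tendsto 0).div_const _).mono_left nhdsWithin_le_nhds
    rw [div_self (hSpos (n+1) le_rfl).ne'] at hT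
    apply hT.congr'
    filter_upwards [self_mem_nhdsWithin] with x hx
    have hx0 : (0:ℝ) < x := hx
    rw [hiter (n+1) le_rfl, GG, if_pos hx0]
    have he : a - ((n+1:ℕ):ℝ) = a - 1 - (n:ℝ) := by push_cast; ring
    have hxe : x ^ (a - 1 - (n:ℝ)) ≠ 0 := (Real.rpow_pos_of_pos hx0 _).ne'
    have hS0 : SS a Φ (n+1) 0 ≠ 0 := (hSpos (n+1) le_rfl).ne'
    rw [he]
    rw [div_eq_div_iff hS0 (mul_ne_zero hS0 hxe)]
    ring
  · have hne : SS a Φ (n+1) 0 ≠ 0 := (hSpos (n+1) le_rfl).ne'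
    have hT : Tendsto (fun x : ℝ => (x * SS a Φ n x) / SS a Φ (n+1) x)
        (nhdsWithin 0 (Set.Ioi 0)) (nhds ((0 * SS a Φ n 0) / SS a Φ (n+1) 0)) := by
      apply Tendsto.mono_left _ nhdsWithin_le_nhds
      exact ((continuousAt_id.mul (continuous_SS hΦ n).continuousAt).div
        (continuous_SS hΦ (n+1)).continuousAt hne).tendsto
    rw [zero_mul, zero_div] at hT
    apply hT.congr'
    filter_upwards [self_mem_nhdsWithin] with x hx
    have hx0 : (0:ℝ) < x := hx
    rw [hiter n (by omega), hiter (n+1) le_rfl, GG, GG, if_pos hx0, if_pos hx0]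
    have he : a - (n:ℝ) = (a - ((n+1:ℕ):ℝ)) + 1 := by push_cast; ring
    rw [he, Real.rpow_add_one hx0.ne']
    rw [show x ^ (a - ((n+1:ℕ):ℝ)) * x * SS a Φ n x
        = x ^ (a - ((n+1:ℕ):ℝ)) * (x * SS a Φ n x) by ring]
    rw [mul_div_mul_left _ _ (Real.rpow_pos_of_pos hx0 _).ne']

end ChiAux
open scoped ENNReal NNReal

namespace ChiAux

lemma lintegral_pi_fin : ∀ (k : ℕ) (f : Fin k → ℝ → ℝ≥0∞), (∀ i, Measurable (f i)) →
    ∫⁻ y, ∏ i, f i (y i) ∂(Measure.pi fun _ : Fin k => (volume : Measure ℝ))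
      = ∏ i, ∫⁻ t, f i t := by
  intro k
  induction k with
  | zero =>
    intro f _
    rw [Measure.pi_of_empty, lintegral_dirac]
    simp
  | succ k ih =>
    intro f hf
    have hmp := measurePreserving_piFinSuccAbove (fun _ : Fin (k+1) => (volume : Measure ℝ)) 0
    have hprodmeas : Measurable (fun z : Fin k → ℝ => ∏ i : Fin k, f i.succ (z i)) :=
      Finset.measurable_prod _ fun i _ => (hf i.succ).comp (measurable_pi_apply i)
    have hmeasg : Measurable (fun p : ℝ × (Fin k → ℝ) => f 0 p.1 * ∏ i : Fin k, f i.succ (p.2 i)) :=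
      ((hf 0).comp measurable_fst).mul (hprodmeas.comp measurable_snd)
    have key := hmp.lintegral_comp hmeasg
    have heq : ∀ y : Fin (k+1) → ℝ,
        (fun p : ℝ × (Fin k → ℝ) => f 0 p.1 * ∏ i : Fin k, f i.succ (p.2 i))
          ((MeasurableEquiv.piFinSuccAbove (fun _ => ℝ) 0) y) = ∏ i, f i (y i) := by
      intro y
      show f 0 (y 0) * ∏ i : Fin k, f i.succ (y (Fin.succAbove 0 i)) = _
      rw [Fin.prod_univ_succ]
      simp [Fin.succAbove_zero]
    calc ∫⁻ y, ∏ i, f i (y i) ∂(Measure.pi fun _ : Fin (k+1) => (volume : Measure ℝ))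
        = ∫⁻ y, (fun p : ℝ × (Fin k → ℝ) => f 0 p.1 * ∏ i : Fin k, f i.succ (p.2 i))
            ((MeasurableEquiv.piFinSuccAbove (fun _ => ℝ) 0) y)
            ∂(Measure.pi fun _ : Fin (k+1) => (volume : Measure ℝ)) := by
          apply lintegral_congr
          intro y
          rw [heq y]
      _ = ∫⁻ p, f 0 p.1 * ∏ i : Fin k, f i.succ (p.2 i)
            ∂((volume : Measure ℝ).prod (Measure.pi fun _ : Fin k => (volume : Measure ℝ))) := key
      _ = (∫⁻ t, f 0 t) * ∏ i : Fin k, ∫⁻ t, f i.succ t := by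
          rw [lintegral_prod_mul (hf 0).aemeasurable hprodmeas.aemeasurable,
            ih _ (fun i => hf i.succ)]
      _ = ∏ i, ∫⁻ t, f i t := (Fin.prod_univ_succ (fun i => ∫⁻ t, f i t)).symm

lemma pi_withDensity_fin (k : ℕ) (f : ℝ → ℝ≥0∞) (hf : Measurable f)
    [SigmaFinite ((volume : Measure ℝ).withDensity f)] :
    Measure.pi (fun _ : Fin k => (volume : Measure ℝ).withDensity f)
      = (volume : Measure (Fin k → ℝ)).withDensity (fun y => ∏ i, f (y i)) := by
  refine Measure.pi_eq fun s hs => ?_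
  rw [withDensity_apply _ (MeasurableSet.univ_pi hs)]
  have h1 : ∫⁻ y in Set.univ.pi s, ∏ i, f (y i) ∂(volume : Measure (Fin k → ℝ))
      = ∫⁻ y, ∏ i, ((s i).indicator f) (y i) ∂(volume : Measure (Fin k → ℝ)) := by
    rw [← lintegral_indicator (MeasurableSet.univ_pi hs)]
    apply lintegral_congr
    intro y
    by_cases hy : y ∈ Set.univ.pi s
    · rw [Set.indicator_of_mem hy]
      exact Finset.prod_congr rfl fun i _ =>
        (Set.indicator_of_mem (hy i (Set.mem_univ i)) f).symm
    · rw [Set.indicator_of_notMem hy]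
      rw [Set.mem_univ_pi] at hy
      push_neg at hy
      obtain ⟨i, hi⟩ := hy
      exact (Finset.prod_eq_zero (Finset.mem_univ i)
        (Set.indicator_of_notMem hi f)).symm
  rw [h1, MeasureTheory.volume_pi, lintegral_pi_fin k _ (fun i => hf.indicator (hs i))]
  exact Finset.prod_congr rfl fun i _ => by
    rw [lintegral_indicator (hs i), withDensity_apply _ (hs i)]

lemma hasDerivAt_laplace {α : Type*} [MeasurableSpace α] (ν : Measure α) [IsFiniteMeasure ν]
    (w : α → ℝ) (hw : Measurable w) (W : ℝ) (hW0 : 0 ≤ W)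
    (hbd : ∀ᵐ z ∂ν, 0 ≤ w z ∧ w z ≤ W)
    (K : ℝ) (k : ℕ) (t : ℝ) :
    HasDerivAt (fun s => ∫ z, (-(w z))^k * (K * Real.exp (-(s * w z))) ∂ν)
      (∫ z, (-(w z))^(k+1) * (K * Real.exp (-(t * w z))) ∂ν) t := by
  have hmeas : ∀ (s : ℝ) (j : ℕ),
      Measurable fun z => (-(w z))^j * (K * Real.exp (-(s * w z))) :=
    fun s j => ((hw.neg.pow_const j).mul
      (measurable_const.mul ((hw.const_mul s).neg.exp)))
  have hbnd : ∀ (j : ℕ) (s : ℝ) (z : α), 0 ≤ w z → w z ≤ W → |s| ≤ |t| + 1 →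
      ‖(-(w z))^j * (K * Real.exp (-(s * w z)))‖ ≤ W^j * (|K| * Real.exp ((|t|+1) * W)) := by
    intro j s z h0 hWz hs
    rw [Real.norm_eq_abs, abs_mul, abs_pow, abs_neg, abs_of_nonneg h0, abs_mul,
      Real.abs_exp]
    have he : Real.exp (-(s * w z)) ≤ Real.exp ((|t|+1) * W) := by
      apply Real.exp_le_exp.mpr
      have h1 : -(s * w z) ≤ |s| * w z := by
        rw [← neg_mul]
        exact mul_le_mul_of_nonneg_right (neg_le_abs s) h0
      have h2 : |s| * w z ≤ (|t|+1) * W :=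
        mul_le_mul hs hWz h0 (by positivity)
      linarith
    have hp : w z ^ j ≤ W ^ j := pow_le_pow_left₀ h0 hWz j
    exact mul_le_mul hp (mul_le_mul_of_nonneg_left he (abs_nonneg K))
      (by positivity) (by positivity)
  refine (hasDerivAt_integral_of_dominated_loc_of_deriv_le
    (F := fun s z => (-(w z))^k * (K * Real.exp (-(s * w z))))
    (F' := fun s z => (-(w z))^(k+1) * (K * Real.exp (-(s * w z))))
    (bound := fun _ => W^(k+1) * (|K| * Real.exp ((|t|+1) * W)))
    (μ := ν) (x₀ := t) (Metric.ball_mem_nhds t one_pos)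
    (Filter.Eventually.of_forall fun s => (hmeas s k).aestronglyMeasurable)
    ?_ ((hmeas t (k+1)).aestronglyMeasurable) ?_ (integrable_const _) ?_).2
  · -- Integrable (F t)
    apply (integrable_const (W^k * (|K| * Real.exp ((|t|+1) * W)))).mono'
      (hmeas t k).aestronglyMeasurable
    filter_upwards [hbd] with z hz
    exact hbnd k t z hz.1 hz.2 (by linarith [abs_nonneg t])
  · -- bound
    filter_upwards [hbd] with z hz s hs
    apply hbnd (k+1) s z hz.1 hz.2
    have : |s - t| < 1 := by simpa [Real.dist_eq] using Metric.mem_ball.mp hs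
    calc |s| = |t + (s - t)| := by ring_nf
      _ ≤ |t| + |s - t| := abs_add_le _ _
      _ ≤ |t| + 1 := by linarith
  · -- differentiability
    apply Filter.Eventually.of_forall
    intro z s _
    have h1 : HasDerivAt (fun s : ℝ => -(s * w z)) (-(w z)) s := by
      simpa using (hasDerivAt_mul_const (w z) (x := s)).fun_neg
    have h2 : HasDerivAt (fun s : ℝ => Real.exp (-(s * w z)))
        (Real.exp (-(s * w z)) * (-(w z))) s := h1.exp
    have h3 := (h2.const_mul K).const_mul ((-(w z))^k)
    convert h3 using 1
    show (-(w z)) ^ (k + 1) * (K * Real.exp (-(s * w z))) = _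
    rw [pow_succ]
    ring
    rfl

end ChiAux
/-- For a finite sum `F(x) = P{∑_{j=1}^m μ_j ξ_j² < x}` with `ξ_j` i.i.d. standard normal
and every `n < m/2 - 1`: `F` is `(n+1)` times differentiable near `0`, `F⁽ⁿ⁺¹⁾(0) = 0`,
`F⁽ⁿ⁺¹⁾(x) ∼ C x^{m/2-1-n}` as `x → 0⁺` for some `C > 0`, and consequently
`F⁽ⁿ⁾(x) = o(F⁽ⁿ⁺¹⁾(x))` as `x → 0⁺`. -/
theorem finite_sum_derivatives
    {Ω : Type*} [MeasurableSpace Ω] (Pr : Measure Ω) [IsProbabilityMeasure Pr]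
    (m : ℕ) (ξ : Fin m → Ω → ℝ) (hmeas : ∀ j, Measurable (ξ j))
    (hindep : iIndepFun ξ Pr)
    (hgauss : ∀ j, Measure.map (ξ j) Pr = gaussianReal 0 1)
    (μ : Fin m → ℝ) (hμpos : ∀ j, 0 < μ j)
    (F : ℝ → ℝ)
    (hF : ∀ x, F x = (Pr {ω | ∑ j, μ j * (ξ j ω) ^ 2 < x}).toReal)
    (n : ℕ) (hn : (n : ℝ) < (m : ℝ) / 2 - 1) :
    (∃ δ > (0:ℝ), ∀ x ∈ Set.Ioo (-δ) δ, ∀ k ≤ n,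
      DifferentiableAt ℝ (iteratedDeriv k F) x) ∧
    iteratedDeriv (n + 1) F 0 = 0 ∧
    (∃ C > (0:ℝ), Tendsto
      (fun x : ℝ => iteratedDeriv (n + 1) F x / (C * x ^ ((m : ℝ) / 2 - 1 - n)))
      (nhdsWithin 0 (Set.Ioi 0)) (nhds 1)) ∧
    Tendsto (fun x => iteratedDeriv n F x / iteratedDeriv (n + 1) F x)
      (nhdsWithin 0 (Set.Ioi 0)) (nhds 0) := by
  classical
  have hncast : (0:ℝ) ≤ (n:ℝ) := Nat.cast_nonneg n
  have hm2 : (2:ℝ) < (m:ℝ) := by linarith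
  -- the sets
  set A : ℝ → Set (Fin m → ℝ) := fun x => {y | ∑ j, μ j * (y j)^2 < x} with hAdef
  have hcontsum : Continuous fun y : Fin m → ℝ => ∑ j, μ j * (y j)^2 :=
    continuous_finset_sum _ fun j _ => continuous_const.mul ((continuous_apply j).pow 2)
  have hA : ∀ x, MeasurableSet (A x) :=
    fun x => (isOpen_lt hcontsum continuous_const).measurableSet
  set B : Set (Fin m → ℝ) := A 1 with hBdef
  have hBopen : IsOpen B := isOpen_lt hcontsum continuous_const
  have hBmeas : MeasurableSet B := hBopen.measurableSet
  -- coordinate bounds on B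
  have hcoord : ∀ z ∈ B, ∀ j, (z j)^2 ≤ (μ j)⁻¹ := by
    intro z hz j
    have h1 : μ j * (z j)^2 ≤ ∑ j', μ j' * (z j')^2 :=
      Finset.single_le_sum (f := fun j' => μ j' * (z j')^2)
        (fun i _ => mul_nonneg (hμpos i).le (sq_nonneg _)) (Finset.mem_univ j)
    have h2 : ∑ j', μ j' * (z j')^2 < 1 := hz
    have h3 : μ j * (z j)^2 ≤ 1 := h1.trans h2.le
    calc (z j)^2 = (μ j)⁻¹ * (μ j * (z j)^2) := by
          field_simp
          rw [eq_div_iff (hμpos j).ne']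
      _ ≤ (μ j)⁻¹ * 1 := mul_le_mul_of_nonneg_left h3 (inv_nonneg.mpr (hμpos j).le)
      _ = (μ j)⁻¹ := mul_one _
  -- B is bounded hence finite measure
  have hBsub : B ⊆ Metric.closedBall 0 (Real.sqrt (∑ j, (μ j)⁻¹)) := by
    intro z hz
    rw [Metric.mem_closedBall, dist_zero_right]
    refine (pi_norm_le_iff_of_nonneg (Real.sqrt_nonneg _)).mpr fun j => ?_
    rw [Real.norm_eq_abs, ← Real.sqrt_sq_eq_abs]
    apply Real.sqrt_le_sqrt
    exact (hcoord z hz j).trans (Finset.single_le_sum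
      (f := fun j' => (μ j')⁻¹) (fun i _ => inv_nonneg.mpr (hμpos i).le) (Finset.mem_univ j))
  have hBfin : volume B < ⊤ :=
    (measure_mono hBsub).trans_lt measure_closedBall_lt_top
  have hB0 : (0 : Fin m → ℝ) ∈ B := by
    simp [hBdef, hAdef]
  have hBpos : 0 < volume B := hBopen.measure_pos volume ⟨0, hB0⟩
  -- the weight function and constants
  set w : (Fin m → ℝ) → ℝ := fun z => (∑ j, (z j)^2)/2 with hwdef
  set W : ℝ := (∑ j, (μ j)⁻¹)/2 with hWdef
  set K : ℝ := ((Real.sqrt (2 * Real.pi))⁻¹)^m with hKdef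
  have hwmeas : Measurable w :=
    (Finset.measurable_sum _ fun j _ => (measurable_pi_apply j).pow_const 2).div_const 2
  have hw0 : ∀ z, 0 ≤ w z := fun z => by
    have : (0:ℝ) ≤ ∑ j, (z j)^2 := Finset.sum_nonneg fun j _ => sq_nonneg _
    simp only [hwdef]; positivity
  have hW0 : (0:ℝ) ≤ W := by
    have : (0:ℝ) ≤ ∑ j, (μ j)⁻¹ := Finset.sum_nonneg fun j _ => inv_nonneg.mpr (hμpos j).le
    simp only [hWdef]; positivity
  have hwB : ∀ z ∈ B, w z ≤ W := by
    intro z hz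
    simp only [hwdef, hWdef]
    have := Finset.sum_le_sum (fun j (_ : j ∈ Finset.univ) => hcoord z hz j)
    linarith
  have hK : 0 < K := by
    have h2π : (0:ℝ) < 2 * Real.pi := by positivity
    simp only [hKdef]
    positivity
  -- Φ
  haveI : IsFiniteMeasure ((volume : Measure (Fin m → ℝ)).restrict B) :=
    ⟨by rw [Measure.restrict_apply_univ]; exact hBfin⟩
  set Φ : ℕ → ℝ → ℝ :=
    fun k t => ∫ z in B, (-(w z))^k * (K * Real.exp (-(t * w z))) with hΦdef
  have hbd : ∀ᵐ z ∂((volume : Measure (Fin m → ℝ)).restrict B), 0 ≤ w z ∧ w z ≤ W :=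
    (ae_restrict_iff' hBmeas).mpr (ae_of_all _ fun z hz => ⟨hw0 z, hwB z hz⟩)
  have hΦ : ∀ k t, HasDerivAt (Φ k) (Φ (k+1) t) t :=
    fun k t => ChiAux.hasDerivAt_laplace _ w hwmeas W hW0 hbd K k t
  have hΦ0 : 0 < Φ 0 0 := by
    have h1 : Φ 0 0 = ∫ z in B, K := by
      simp [hΦdef]
    rw [h1, setIntegral_const, smul_eq_mul]
    exact mul_pos (ENNReal.toReal_pos hBpos.ne' hBfin.ne) hK
  -- the joint law
  set T : Ω → (Fin m → ℝ) := fun ω j => ξ j ω with hTdef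
  have hT : Measurable T := measurable_pi_lambda _ hmeas
  have hmapT : Measure.map T Pr = Measure.pi (fun _ : Fin m => gaussianReal 0 1) := by
    refine (Measure.pi_eq fun s hs => ?_).symm
    rw [Measure.map_apply hT (MeasurableSet.univ_pi hs)]
    have hpre : T ⁻¹' Set.univ.pi s = ⋂ j, ξ j ⁻¹' s j := by
      ext ω
      simp [hTdef, Set.mem_univ_pi]
    rw [hpre, hindep.meas_iInter (fun i => ⟨s i, hs i, rfl⟩)]
    exact Finset.prod_congr rfl fun j _ => by
      rw [← hgauss j, Measure.map_apply (hmeas j) (hs j)]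
  have hPrA : ∀ x, Pr {ω | ∑ j, μ j * (ξ j ω)^2 < x}
      = Measure.pi (fun _ : Fin m => gaussianReal 0 1) (A x) := by
    intro x
    rw [← hmapT, Measure.map_apply hT (hA x)]
    congr 1
  -- gaussian pi measure as density
  have hpig : Measure.pi (fun _ : Fin m => gaussianReal 0 1)
      = (volume : Measure (Fin m → ℝ)).withDensity
          (fun y => ∏ j, ENNReal.ofReal (gaussianPDFReal 0 1 (y j))) := by
    have h1 : (fun _ : Fin m => gaussianReal 0 1)
        = fun _ : Fin m => (volume : Measure ℝ).withDensity
            (fun t => ENNReal.ofReal (gaussianPDFReal 0 1 t)) := by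
      funext
      rw [gaussianReal_of_var_ne_zero 0 one_ne_zero, gaussianPDF_def]
    rw [h1, ChiAux.pi_withDensity_fin m _ (measurable_gaussianPDFReal 0 1).ennreal_ofReal]
  set ρ : (Fin m → ℝ) → ℝ := fun y => ∏ j, gaussianPDFReal 0 1 (y j) with hρdef
  have hρmeas : Measurable ρ :=
    Finset.measurable_prod _ fun j _ =>
      (measurable_gaussianPDFReal 0 1).comp (measurable_pi_apply j)
  have hρnn : ∀ y, 0 ≤ ρ y :=
    fun y => Finset.prod_nonneg fun j _ => gaussianPDFReal_nonneg 0 1 (y j)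
  have hFint : ∀ x, F x = ∫ y in A x, ρ y := by
    intro x
    rw [hF x, hPrA x, hpig, withDensity_apply _ (hA x),
      integral_eq_lintegral_of_nonneg_ae (ae_of_all _ fun y => hρnn y)
        hρmeas.aestronglyMeasurable]
    congr 1
    apply lintegral_congr
    intro y
    exact (ENNReal.ofReal_prod_of_nonneg fun j _ => gaussianPDFReal_nonneg 0 1 (y j)).symm
  -- gaussian density formula
  have hg : ∀ t : ℝ, gaussianPDFReal 0 1 t
      = (Real.sqrt (2 * Real.pi))⁻¹ * Real.exp (-(t^2/2)) := by
    intro t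
    simp [gaussianPDFReal]
    exact Or.inl (by ring)
  -- F vanishes on nonpositive reals
  have hFneg : ∀ x : ℝ, x ≤ 0 → F x = 0 := by
    intro x hx
    have hempty : {ω | ∑ j, μ j * (ξ j ω)^2 < x} = ∅ := by
      apply Set.eq_empty_iff_forall_notMem.mpr
      intro ω hω
      have h1 : (0:ℝ) ≤ ∑ j, μ j * (ξ j ω)^2 :=
        Finset.sum_nonneg fun j _ => mul_nonneg (hμpos j).le (sq_nonneg _)
      have h2 : ∑ j, μ j * (ξ j ω)^2 < x := hω
      linarith
    rw [hF x, hempty]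
    simp
  -- positive part: scaling
  have hFpos : ∀ x : ℝ, 0 < x → F x = x ^ ((m:ℝ)/2) * Φ 0 x := by
    intro x hx
    have hxr : (0:ℝ) < Real.sqrt x := Real.sqrt_pos.mpr hx
    have hsmul : ∀ z : Fin m → ℝ, (Real.sqrt x • z ∈ A x ↔ z ∈ B) := by
      intro z
      simp only [hAdef, hBdef, Set.mem_setOf_eq]
      have hterm : ∀ j, μ j * ((Real.sqrt x • z) j)^2 = x * (μ j * (z j)^2) := by
        intro j
        simp only [Pi.smul_apply, smul_eq_mul, mul_pow]
        rw [Real.sq_sqrt hx.le]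
        ring
      rw [Finset.sum_congr rfl fun j _ => hterm j, ← Finset.mul_sum]
      exact mul_lt_iff_lt_one_right hx
    have hcomp : ∀ z, (A x).indicator ρ (Real.sqrt x • z)
        = B.indicator (fun z => ρ (Real.sqrt x • z)) z := by
      intro z
      by_cases hz : z ∈ B
      · rw [Set.indicator_of_mem hz, Set.indicator_of_mem ((hsmul z).mpr hz)]
      · rw [Set.indicator_of_notMem hz,
          Set.indicator_of_notMem (fun h => hz ((hsmul z).mp h))]
    have hρsm : ∀ z, ρ (Real.sqrt x • z) = K * Real.exp (-(x * w z)) := by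
      intro z
      calc ρ (Real.sqrt x • z)
          = ∏ j, gaussianPDFReal 0 1 ((Real.sqrt x • z) j) := by simp only [hρdef]
        _ = ∏ j, ((Real.sqrt (2 * Real.pi))⁻¹ * Real.exp (-((Real.sqrt x * z j)^2/2))) := by
            apply Finset.prod_congr rfl
            intro j _
            simp only [Pi.smul_apply, smul_eq_mul]
            rw [hg]
        _ = K * Real.exp (-(x * w z)) := by
            rw [Finset.prod_mul_distrib, Finset.prod_const, ← Real.exp_sum]
            congr 1
            · simp [hKdef]
            · refine congrArg Real.exp ?_
              calc ∑ j, -((Real.sqrt x * z j)^2/2)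
                  = ∑ j, (-(x/2)) * (z j)^2 := Finset.sum_congr rfl fun j _ => by
                    rw [mul_pow, Real.sq_sqrt hx.le]; ring
                _ = (-(x/2)) * ∑ j, (z j)^2 := (Finset.mul_sum _ _ _).symm
                _ = -(x * w z) := by simp only [hwdef]; ring
    have hscale := Measure.integral_comp_smul (volume : Measure (Fin m → ℝ))
      ((A x).indicator ρ) (Real.sqrt x)
    rw [Module.finrank_pi, Fintype.card_fin] at hscale
    have habs : |((Real.sqrt x)^m)⁻¹| = ((Real.sqrt x)^m)⁻¹ :=
      abs_of_pos (by positivity)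
    have hpow : (Real.sqrt x)^m ≠ 0 := by positivity
    have hEi : ∫ y, (A x).indicator ρ y
        = (Real.sqrt x)^m * ∫ z, (A x).indicator ρ (Real.sqrt x • z) := by
      rw [hscale, habs, smul_eq_mul]
      field_simp
    have hrm : (Real.sqrt x)^m = x ^ ((m:ℝ)/2) := by
      rw [Real.sqrt_eq_rpow, ← Real.rpow_natCast (x ^ ((1:ℝ)/2)) m, ← Real.rpow_mul hx.le]
      congr 1
      ring
    calc F x = ∫ y in A x, ρ y := hFint x
      _ = ∫ y, (A x).indicator ρ y := (integral_indicator (hA x)).symm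
      _ = (Real.sqrt x)^m * ∫ z, (A x).indicator ρ (Real.sqrt x • z) := hEi
      _ = (Real.sqrt x)^m * ∫ z, B.indicator (fun z => ρ (Real.sqrt x • z)) z := by
          congr 1
          exact integral_congr_ae (ae_of_all _ hcomp)
      _ = (Real.sqrt x)^m * ∫ z in B, ρ (Real.sqrt x • z) := by
          rw [integral_indicator hBmeas]
      _ = (Real.sqrt x)^m * ∫ z in B, (-(w z))^0 * (K * Real.exp (-(x * w z))) := by
          congr 1
          apply integral_congr_ae (ae_of_all _ fun z => ?_)
          rw [hρsm z, pow_zero, one_mul]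
      _ = x ^ ((m:ℝ)/2) * Φ 0 x := by rw [hrm, hΦdef]
  -- apply the analysis lemma
  have hn' : (n:ℝ) + 1 < (m:ℝ)/2 := by linarith
  obtain ⟨h1, h2, h3, h4⟩ :=
    ChiAux.analysis_main ((m:ℝ)/2) n hn' Φ hΦ hΦ0 F hFpos hFneg
  exact ⟨⟨1, one_pos, fun x _ k hk => h1 k hk x⟩, h2, h3, h4⟩
end

section
/- Let L : (0,a) → (0,∞) be differentiable with lim_{x→0⁺} x·L'(x)/L(x) = 0. Then for every c > 0 and β > 0, lim_{x→0⁺} L(x + c·x^{β+1})/L(x) = 1. -/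
open Filter

/-- If `L` is positive and differentiable on `(0,a)` with `x L'(x)/L(x) → 0` as `x → 0⁺`
(the Karamata form of slow variation at zero), then for all `c > 0` and `β > 0` one has
`L(x + c x^{β+1}) / L(x) → 1` as `x → 0⁺`. -/
theorem slowly_varying_shift
    (L : ℝ → ℝ) (a : ℝ) (ha : 0 < a)
    (hLpos : ∀ x ∈ Set.Ioo 0 a, 0 < L x)
    (hLdiff : ∀ x ∈ Set.Ioo (0:ℝ) a, DifferentiableAt ℝ L x)
    (hLslow : Tendsto (fun x => x * deriv L x / L x) (nhdsWithin 0 (Set.Ioi 0)) (nhds 0)) :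
    ∀ c > (0:ℝ), ∀ β > (0:ℝ),
      Tendsto (fun x : ℝ => L (x + c * x ^ (β + 1)) / L x)
        (nhdsWithin 0 (Set.Ioi 0)) (nhds 1) := by
  intro c hc β hβ
  -- bound on the slow-variation quotient
  have h1 : ∀ᶠ t in nhdsWithin 0 (Set.Ioi 0), |t * deriv L t / L t| < 1 := by
    have := hLslow.eventually (eventually_abs_sub_lt 0 one_pos)
    simpa using this
  rw [eventually_nhdsWithin_iff, Metric.eventually_nhds_iff] at h1
  obtain ⟨ε, hε, hεbound⟩ := h1
  set δ := min ε a with hδdef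
  have hδ : 0 < δ := lt_min hε ha
  have hδε : δ ≤ ε := min_le_left _ _
  have hδa : δ ≤ a := min_le_right _ _
  -- the map x ↦ x + c x^{β+1} tends to 0 from the right
  have htend : Tendsto (fun x : ℝ => x + c * x ^ (β + 1)) (nhdsWithin 0 (Set.Ioi 0)) (nhds 0) := by
    have h2 : Tendsto (fun x : ℝ => x ^ (β + 1)) (nhds 0) (nhds 0) := by
      have := (Real.continuousAt_rpow_const 0 (β + 1) (Or.inr (by positivity))).tendsto
      simpa [Real.zero_rpow (by positivity : β + 1 ≠ 0)] using this
    have h3 : Tendsto (fun x : ℝ => x + c * x ^ (β + 1)) (nhds 0) (nhds 0) := by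
      have := Filter.Tendsto.add (tendsto_id (x := nhds (0:ℝ))) ((h2.const_mul c))
      simpa using this
    exact h3.mono_left nhdsWithin_le_nhds
  -- the good set
  have hgood : ∀ᶠ x in nhdsWithin 0 (Set.Ioi 0), 0 < x ∧ x + c * x ^ (β + 1) < δ := by
    filter_upwards [self_mem_nhdsWithin, htend.eventually (eventually_lt_nhds hδ)] with x hx hx2
    exact ⟨hx, hx2⟩
  -- key bound on the log difference
  have hkey : ∀ᶠ x in nhdsWithin 0 (Set.Ioi 0),
      |Real.log (L (x + c * x ^ (β + 1))) - Real.log (L x)| ≤ c * x ^ β := by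
    filter_upwards [hgood] with x hx
    obtain ⟨hx0, hxδ⟩ := hx
    set y := x + c * x ^ (β + 1) with hy
    have hpow : 0 < x ^ (β + 1) := Real.rpow_pos_of_pos hx0 _
    have hxy : x < y := by
      have : 0 < c * x ^ (β + 1) := by positivity
      linarith
    have hsub : ∀ t ∈ Set.Icc x y, t ∈ Set.Ioo (0:ℝ) a := by
      intro t ht
      exact ⟨lt_of_lt_of_le hx0 ht.1, lt_of_le_of_lt ht.2 (lt_of_lt_of_le hxδ hδa)⟩
    have hlog : ∀ t ∈ Set.Icc x y, HasDerivAt (fun s => Real.log (L s)) (deriv L t / L t) t := by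
      intro t ht
      exact ((hLdiff t (hsub t ht)).hasDerivAt).log (hLpos t (hsub t ht)).ne'
    obtain ⟨ξ, hξ, hξeq⟩ := exists_hasDerivAt_eq_slope (fun s => Real.log (L s))
      (fun t => deriv L t / L t) hxy
      (fun t ht => (hlog t ht).continuousAt.continuousWithinAt)
      (fun t ht => hlog t (Set.mem_Icc_of_Ioo ht))
    have hξ0 : 0 < ξ := lt_trans hx0 hξ.1
    have hξδ : ξ < δ := lt_trans hξ.2 hxδ
    have hξbound : |ξ * deriv L ξ / L ξ| < 1 := by
      apply hεbound
      · simpa [abs_of_pos hξ0] using lt_of_lt_of_le hξδ hδε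
      · exact hξ0
    have heq : Real.log (L y) - Real.log (L x) = (deriv L ξ / L ξ) * (y - x) := by
      rw [eq_div_iff (sub_ne_zero.mpr hxy.ne')] at hξeq
      linarith [hξeq]
    have hyx : y - x = c * x ^ (β + 1) := by ring
    rw [heq, abs_mul]
    have h4 : |deriv L ξ / L ξ| = |ξ * deriv L ξ / L ξ| / ξ := by
      rw [mul_div_assoc, abs_mul, abs_of_pos hξ0, mul_div_assoc]
      field_simp
    have h5 : |y - x| = c * x ^ (β + 1) := by
      rw [hyx]; exact abs_of_pos (by positivity)
    rw [h4, h5]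
    have h6 : |ξ * deriv L ξ / L ξ| / ξ ≤ 1 / x := by
      apply div_le_div₀ (by norm_num) hξbound.le hx0 hξ.1.le
    calc |ξ * deriv L ξ / L ξ| / ξ * (c * x ^ (β + 1))
        ≤ 1 / x * (c * x ^ (β + 1)) := by
          apply mul_le_mul_of_nonneg_right h6 (by positivity)
      _ = c * x ^ β := by
          rw [Real.rpow_add_one hx0.ne' β]
          field_simp
  -- the log difference tends to 0
  have hbound_tendsto : Tendsto (fun x : ℝ => c * x ^ β) (nhdsWithin 0 (Set.Ioi 0)) (nhds 0) := by
    have h2 : Tendsto (fun x : ℝ => x ^ β) (nhds 0) (nhds 0) := by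
      have := (Real.continuousAt_rpow_const 0 β (Or.inr hβ.le)).tendsto
      simpa [Real.zero_rpow hβ.ne'] using this
    have := (h2.const_mul c).mono_left (nhdsWithin_le_nhds (s := Set.Ioi (0:ℝ)))
    simpa using this
  have hlogdiff : Tendsto (fun x : ℝ => Real.log (L (x + c * x ^ (β + 1))) - Real.log (L x))
      (nhdsWithin 0 (Set.Ioi 0)) (nhds 0) := by
    apply squeeze_zero_norm' _ hbound_tendsto
    filter_upwards [hkey] with x hx
    simpa [Real.norm_eq_abs] using hx
  -- conclude via exp
  have hexp : Tendsto (fun x : ℝ => Real.exp (Real.log (L (x + c * x ^ (β + 1))) - Real.log (L x)))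
      (nhdsWithin 0 (Set.Ioi 0)) (nhds 1) := by
    have := (Real.continuous_exp.tendsto 0).comp hlogdiff
    simpa [Function.comp_def] using this
  apply hexp.congr'
  filter_upwards [hgood] with x hx
  obtain ⟨hx0, hxδ⟩ := hx
  have hpow : 0 < x ^ (β + 1) := Real.rpow_pos_of_pos hx0 _
  have hy0 : 0 < x + c * x ^ (β + 1) := by positivity
  have hya : x + c * x ^ (β + 1) < a := lt_of_lt_of_le hxδ hδa
  have hxa : x < a := by nlinarith
  have hLx : 0 < L x := hLpos x ⟨hx0, hxa⟩
  have hLy : 0 < L (x + c * x ^ (β + 1)) := hLpos _ ⟨hy0, hya⟩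
  rw [Real.exp_sub, Real.exp_log hLy, Real.exp_log hLx]
end

section
/- Let 𝒟 > 0, d > 0 and γ ∈ ℝ. Then, as r → 0⁺, ∫₀^r x^γ · exp(−𝒟 x^{−d}) · (r−x)^{−1/2} dx ∼ sqrt(π/(𝒟d)) · r^{γ+(d+1)/2} · exp(−𝒟 r^{−d}). -/
open Filter

namespace AbelAux
open MeasureTheory Set


/-- The gamma-type integral over `Ioi 0`. -/
lemma gamma_val {l : ℝ} (hl : 0 < l) :
    ∫ t : ℝ in Ioi (0:ℝ), t ^ ((1:ℝ)/2 - 1) * Real.exp (-(l * t))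
      = (1/l) ^ ((1:ℝ)/2) * Real.sqrt Real.pi := by
  rw [Real.integral_rpow_mul_exp_neg_mul_Ioi (by norm_num) hl, Real.Gamma_one_half_eq]

lemma gamma_pos {l : ℝ} (hl : 0 < l) :
    0 < (1/l) ^ ((1:ℝ)/2) * Real.sqrt Real.pi := by
  have := Real.pi_pos
  positivity

lemma gamma_integrable {l : ℝ} (hl : 0 < l) :
    IntegrableOn (fun t : ℝ => t ^ ((1:ℝ)/2 - 1) * Real.exp (-(l * t))) (Ioi 0) := by
  by_contra h
  have h0 : (∫ t : ℝ in Ioi (0:ℝ), t ^ ((1:ℝ)/2 - 1) * Real.exp (-(l * t))) = 0 :=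
    integral_undef h
  rw [gamma_val hl] at h0
  exact (gamma_pos hl).ne' h0

lemma gamma_nonneg_ae {l : ℝ} (s : Set ℝ) (hs : MeasurableSet s) (h : s ⊆ Ioi 0) :
    0 ≤ᶠ[ae (volume.restrict s)] fun t : ℝ => t ^ ((1:ℝ)/2 - 1) * Real.exp (-(l * t)) := by
  refine (ae_restrict_iff' hs).2 (ae_of_all _ fun t ht => ?_)
  have ht0 : (0:ℝ) < t := h ht
  positivity

lemma int_Ioc_le {l : ℝ} (hl : 0 < l) (S : ℝ) :
    ∫ t in Ioc (0:ℝ) S, t ^ ((1:ℝ)/2 - 1) * Real.exp (-(l * t))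
      ≤ (1/l) ^ ((1:ℝ)/2) * Real.sqrt Real.pi := by
  rw [← gamma_val hl]
  exact setIntegral_mono_set (gamma_integrable hl)
    (gamma_nonneg_ae _ measurableSet_Ioi (fun x hx => hx))
    (HasSubset.Subset.eventuallyLE Ioc_subset_Ioi_self)

lemma int_Ioi_tail_le {l S : ℝ} (hl : 0 < l) (hS : 0 < S) :
    ∫ t in Ioi S, t ^ ((1:ℝ)/2 - 1) * Real.exp (-(l * t))
      ≤ Real.exp (-(l * S)/2) * ((1/(l/2)) ^ ((1:ℝ)/2) * Real.sqrt Real.pi) := by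
  have hint2 : IntegrableOn (fun t : ℝ => t ^ ((1:ℝ)/2 - 1) * Real.exp (-(l/2 * t))) (Ioi S) :=
    (gamma_integrable (by linarith)).mono_set (Ioi_subset_Ioi hS.le)
  have hint1 : IntegrableOn (fun t : ℝ => t ^ ((1:ℝ)/2 - 1) * Real.exp (-(l * t))) (Ioi S) :=
    (gamma_integrable hl).mono_set (Ioi_subset_Ioi hS.le)
  calc ∫ t in Ioi S, t ^ ((1:ℝ)/2 - 1) * Real.exp (-(l * t))
      ≤ ∫ t in Ioi S, Real.exp (-(l * S)/2) * (t ^ ((1:ℝ)/2 - 1) * Real.exp (-(l/2 * t))) := by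
        refine setIntegral_mono_on hint1 (hint2.const_mul _) measurableSet_Ioi fun t ht => ?_
        have htS : S < t := ht
        have ht0 : 0 < t := hS.trans htS
        have : Real.exp (-(l * t)) ≤ Real.exp (-(l * S)/2) * Real.exp (-(l/2 * t)) := by
          rw [← Real.exp_add]
          apply Real.exp_le_exp.2
          nlinarith
        calc t ^ ((1:ℝ)/2 - 1) * Real.exp (-(l * t))
            ≤ t ^ ((1:ℝ)/2 - 1) * (Real.exp (-(l * S)/2) * Real.exp (-(l/2 * t))) :=
              mul_le_mul_of_nonneg_left this (Real.rpow_nonneg ht0.le _)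
          _ = Real.exp (-(l * S)/2) * (t ^ ((1:ℝ)/2 - 1) * Real.exp (-(l/2 * t))) := by ring
    _ = Real.exp (-(l * S)/2) * ∫ t in Ioi S, t ^ ((1:ℝ)/2 - 1) * Real.exp (-(l/2 * t)) :=
        integral_const_mul _ _
    _ ≤ Real.exp (-(l * S)/2) * ((1/(l/2)) ^ ((1:ℝ)/2) * Real.sqrt Real.pi) := by
        refine mul_le_mul_of_nonneg_left ?_ (Real.exp_nonneg _)
        rw [← gamma_val (by linarith : (0:ℝ) < l/2)]
        exact setIntegral_mono_set (gamma_integrable (by linarith))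
          (gamma_nonneg_ae _ measurableSet_Ioi (fun x hx => hx))
          (HasSubset.Subset.eventuallyLE (Ioi_subset_Ioi hS.le))

lemma int_Ioc_ge {l S : ℝ} (hl : 0 < l) (hS : 0 < S) :
    (1/l) ^ ((1:ℝ)/2) * Real.sqrt Real.pi
        - Real.exp (-(l * S)/2) * ((1/(l/2)) ^ ((1:ℝ)/2) * Real.sqrt Real.pi)
      ≤ ∫ t in Ioc (0:ℝ) S, t ^ ((1:ℝ)/2 - 1) * Real.exp (-(l * t)) := by
  have hsplit : (∫ t in Ioi (0:ℝ), t ^ ((1:ℝ)/2 - 1) * Real.exp (-(l * t)))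
      = (∫ t in Ioc (0:ℝ) S, t ^ ((1:ℝ)/2 - 1) * Real.exp (-(l * t)))
        + ∫ t in Ioi S, t ^ ((1:ℝ)/2 - 1) * Real.exp (-(l * t)) := by
    rw [← setIntegral_union (Ioc_disjoint_Ioi le_rfl) measurableSet_Ioi
      ((gamma_integrable hl).mono_set Ioc_subset_Ioi_self)
      ((gamma_integrable hl).mono_set (Ioi_subset_Ioi hS.le)),
      Ioc_union_Ioi_eq_Ioi hS.le]
  have := int_Ioi_tail_le hl hS
  rw [← gamma_val hl]
  linarith



lemma rpow_anti {e x y : ℝ} (he : 0 ≤ e) (hx : 0 < x) (hxy : x ≤ y) :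
    y ^ (-e) ≤ x ^ (-e) := by
  have hy : 0 < y := hx.trans_le hxy
  rw [Real.rpow_neg hx.le, Real.rpow_neg hy.le]
  exact inv_anti₀ (Real.rpow_pos_of_pos hx e) (Real.rpow_le_rpow hx.le hxy he)

/-- monotonicity of `t ↦ t^(-d) + c*t` when the derivative is nonneg on `[x,y]`. -/
lemma aux_mono {d c x y : ℝ} (hx : 0 < x) (hxy : x ≤ y)
    (hder : ∀ t ∈ Icc x y, 0 ≤ -d * t ^ (-d - 1) + c) :
    x ^ (-d) + c * x ≤ y ^ (-d) + c * y := by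
  have hD : ∀ t ∈ Icc x y, HasDerivAt (fun t : ℝ => t ^ (-d) + c * t)
      (-d * t ^ (-d - 1) + c) t := by
    intro t ht
    have ht0 : t ≠ 0 := (hx.trans_le ht.1).ne'
    have h1 := Real.hasDerivAt_rpow_const (p := -d) (Or.inl ht0)
    have h2 : HasDerivAt (fun t : ℝ => c * t) c t := by
      simpa using (hasDerivAt_id t).const_mul c
    exact h1.add h2
  have hmono : MonotoneOn (fun t : ℝ => t ^ (-d) + c * t) (Icc x y) := by
    apply monotoneOn_of_deriv_nonneg (convex_Icc x y)
    · exact fun t ht => (hD t ht).continuousAt.continuousWithinAt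
    · intro t ht
      rw [interior_Icc] at ht
      exact ((hD t (Ioo_subset_Icc_self ht)).differentiableAt).differentiableWithinAt
    · intro t ht
      rw [interior_Icc] at ht
      rw [(hD t (Ioo_subset_Icc_self ht)).deriv]
      exact hder t (Ioo_subset_Icc_self ht)
  exact hmono (left_mem_Icc.2 hxy) (right_mem_Icc.2 hxy) hxy

lemma aux_anti {d c x y : ℝ} (hx : 0 < x) (hxy : x ≤ y)
    (hder : ∀ t ∈ Icc x y, -d * t ^ (-d - 1) + c ≤ 0) :
    y ^ (-d) + c * y ≤ x ^ (-d) + c * x := by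
  have hD : ∀ t ∈ Icc x y, HasDerivAt (fun t : ℝ => t ^ (-d) + c * t)
      (-d * t ^ (-d - 1) + c) t := by
    intro t ht
    have ht0 : t ≠ 0 := (hx.trans_le ht.1).ne'
    have h1 := Real.hasDerivAt_rpow_const (p := -d) (Or.inl ht0)
    have h2 : HasDerivAt (fun t : ℝ => c * t) c t := by
      simpa using (hasDerivAt_id t).const_mul c
    exact h1.add h2
  have hanti : AntitoneOn (fun t : ℝ => t ^ (-d) + c * t) (Icc x y) := by
    apply antitoneOn_of_deriv_nonpos (convex_Icc x y)
    · exact fun t ht => (hD t ht).continuousAt.continuousWithinAt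
    · intro t ht
      rw [interior_Icc] at ht
      exact ((hD t (Ioo_subset_Icc_self ht)).differentiableAt).differentiableWithinAt
    · intro t ht
      rw [interior_Icc] at ht
      rw [(hD t (Ioo_subset_Icc_self ht)).deriv]
      exact hder t (Ioo_subset_Icc_self ht)
  exact hanti (left_mem_Icc.2 hxy) (right_mem_Icc.2 hxy) hxy

/-- Convexity lower bound: for `0 < x ≤ r`, `r^{-d} + d r^{-d-1}(r-x) ≤ x^{-d}`. -/
lemma conv_lower {d : ℝ} (hd : 0 < d) {x r : ℝ} (hx : 0 < x) (hxr : x ≤ r) :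
    r ^ (-d) + d * r ^ (-d - 1) * (r - x) ≤ x ^ (-d) := by
  have hr : 0 < r := hx.trans_le hxr
  have key := aux_anti (d := d) (c := d * r ^ (-d - 1)) hx hxr ?_
  · nlinarith [key]
  · intro t ht
    have h1 : r ^ (-d-1) ≤ t ^ (-d-1) := by
      have h := rpow_anti (e := d + 1) (by linarith) (hx.trans_le ht.1) ht.2
      have he : -(d+1) = -d - 1 := by ring
      rwa [he] at h
    nlinarith [h1]

/-- Chord upper bound: for `0 < c₀ ≤ x ≤ r`, `x^{-d} ≤ r^{-d} + d c₀^{-d-1}(r-x)`. -/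
lemma conv_upper {d : ℝ} (hd : 0 < d) {c₀ x r : ℝ} (hc : 0 < c₀) (hcx : c₀ ≤ x) (hxr : x ≤ r) :
    x ^ (-d) ≤ r ^ (-d) + d * c₀ ^ (-d - 1) * (r - x) := by
  have hx : 0 < x := hc.trans_le hcx
  have key := aux_mono (d := d) (c := d * c₀ ^ (-d - 1)) hx hxr ?_
  · nlinarith [key]
  · intro t ht
    have h1 : t ^ (-d-1) ≤ c₀ ^ (-d-1) := by
      have h := rpow_anti (e := d + 1) (by linarith) hc (hcx.trans ht.1)
      have he : -(d+1) = -d - 1 := by ring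
      rwa [he] at h
    nlinarith [h1]



/-- `a / √s = a * s ^ (1/2 - 1)` for `0 ≤ s` (both sides `0` when `s = 0`). -/
lemma div_sqrt_eq {s : ℝ} (a : ℝ) (hs : 0 ≤ s) :
    a / Real.sqrt s = a * s ^ ((1:ℝ)/2 - 1) := by
  rcases eq_or_lt_of_le hs with h | h
  · rw [← h, Real.sqrt_zero, div_zero, Real.zero_rpow (by norm_num : ((1:ℝ)/2 - 1) ≠ 0), mul_zero]
  · have : s ^ ((1:ℝ)/2 - 1) = (Real.sqrt s)⁻¹ := by
      rw [show ((1:ℝ)/2 - 1) = -(1/2) by norm_num, Real.rpow_neg hs, Real.sqrt_eq_rpow]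
    rw [this, div_eq_mul_inv]

/-- Monotonicity of `x ↦ x^γ e^{-𝒟 x^{-d}}` near `0`. -/
lemma g_mono {𝒟 d γ : ℝ} (h𝒟 : 0 < 𝒟) (hd : 0 < d) {x y : ℝ} (hx : 0 < x) (hxy : x ≤ y)
    (hy : y ^ d * (1 + |γ|) ≤ 𝒟 * d) :
    x ^ γ * Real.exp (-𝒟 * x ^ (-d)) ≤ y ^ γ * Real.exp (-𝒟 * y ^ (-d)) := by
  have hy0 : 0 < y := hx.trans_le hxy
  -- rewrite via exp
  have hrep : ∀ t : ℝ, 0 < t →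
      t ^ γ * Real.exp (-𝒟 * t ^ (-d)) = Real.exp (Real.log t * γ + -𝒟 * t ^ (-d)) := by
    intro t ht
    rw [Real.exp_add, Real.rpow_def_of_pos ht]
  rw [hrep x hx, hrep y hy0]
  apply Real.exp_le_exp.2
  -- monotone of h t = log t * γ + -𝒟 * t^(-d) on [x,y]
  have hD : ∀ t ∈ Icc x y, HasDerivAt (fun t : ℝ => Real.log t * γ + -𝒟 * t ^ (-d))
      (t⁻¹ * γ + -𝒟 * (-d * t ^ (-d - 1))) t := by
    intro t ht
    have ht0 : t ≠ 0 := (hx.trans_le ht.1).ne'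
    exact ((Real.hasDerivAt_log ht0).mul_const γ).add
      ((Real.hasDerivAt_rpow_const (p := -d) (Or.inl ht0)).const_mul (-𝒟))
  have hmono : MonotoneOn (fun t : ℝ => Real.log t * γ + -𝒟 * t ^ (-d)) (Icc x y) := by
    apply monotoneOn_of_deriv_nonneg (convex_Icc x y)
    · exact fun t ht => (hD t ht).continuousAt.continuousWithinAt
    · intro t ht
      rw [interior_Icc] at ht
      exact ((hD t (Ioo_subset_Icc_self ht)).differentiableAt).differentiableWithinAt
    · intro t ht
      rw [interior_Icc] at ht
      have ht' := Ioo_subset_Icc_self ht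
      rw [(hD t ht').deriv]
      have ht0 : 0 < t := hx.trans_le ht'.1
      -- t⁻¹ * γ + 𝒟 * d * t^(-d-1) ≥ 0
      have h1 : t ^ (-d - 1) = t ^ (-d) * t⁻¹ := by
        rw [show -d - 1 = -d + -1 by ring, Real.rpow_add ht0, Real.rpow_neg_one]
      have h2 : (1 + |γ|) ≤ 𝒟 * d * t ^ (-d) := by
        have ht3 : t ^ d * (1 + |γ|) ≤ 𝒟 * d := by
          have : t ^ d ≤ y ^ d := Real.rpow_le_rpow ht0.le ht'.2 hd.le
          nlinarith [abs_nonneg γ]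
        have htd : 0 < t ^ d := Real.rpow_pos_of_pos ht0 d
        have hinv : t ^ (-d) = (t ^ d)⁻¹ := Real.rpow_neg ht0.le d
        rw [hinv]
        calc (1 + |γ|) = (t ^ d * (1 + |γ|)) * (t ^ d)⁻¹ := by field_simp
          _ ≤ (𝒟 * d) * (t ^ d)⁻¹ := by
              apply mul_le_mul_of_nonneg_right ht3 (inv_nonneg.2 htd.le)
    -- combine
      have hγ : -|γ| ≤ γ := neg_abs_le γ
      have h3 : t⁻¹ * γ + -𝒟 * (-d * t ^ (-d - 1))
          = (γ + 𝒟 * d * t ^ (-d)) * t⁻¹ := by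
        rw [h1]; ring
      rw [h3]
      apply mul_nonneg _ (inv_nonneg.2 ht0.le)
      nlinarith [abs_nonneg γ]
  exact hmono (left_mem_Icc.2 hxy) (right_mem_Icc.2 hxy) hxy

/-- decay: `r^a e^{-c r^{-d}} → 0` as `r → 0⁺`. -/
lemma decay {d : ℝ} (hd : 0 < d) (a : ℝ) {c : ℝ} (hc : 0 < c) :
    Tendsto (fun r : ℝ => r ^ a * Real.exp (-(c * r ^ (-d)))) (nhdsWithin 0 (Ioi 0)) (nhds 0) := by
  have h1 : Tendsto (fun r : ℝ => r ^ (-d)) (nhdsWithin 0 (Ioi 0)) atTop := by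
    have h := (tendsto_rpow_atTop hd).comp tendsto_inv_nhdsGT_zero
    refine h.congr' ?_
    filter_upwards [self_mem_nhdsWithin] with r hr
    have hr0 : (0:ℝ) < r := hr
    simp only [Function.comp_apply]
    rw [Real.inv_rpow hr0.le, ← Real.rpow_neg hr0.le]
  have h2 := (tendsto_rpow_mul_exp_neg_mul_atTop_nhds_zero (-(a/d)) c hc).comp h1
  refine h2.congr' ?_
  filter_upwards [self_mem_nhdsWithin] with r hr
  have hr0 : (0:ℝ) < r := hr
  simp only [Function.comp_apply]
  rw [← Real.rpow_mul hr0.le]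
  have : -d * -(a / d) = a := by field_simp
  rw [this, neg_mul]




lemma f_integrable {𝒟 d γ r : ℝ} (hd : 0 < d) (hr : 0 < r)
    (hC : ∀ x : ℝ, 0 < x → x ≤ r → x ^ γ * Real.exp (-𝒟 * x ^ (-d)) ≤ r ^ γ * Real.exp (-𝒟 * r ^ (-d))) :
    IntervalIntegrable (fun x => x ^ γ * Real.exp (-𝒟 * x ^ (-d)) / Real.sqrt (r - x)) volume 0 r := by
  set C := r ^ γ * Real.exp (-𝒟 * r ^ (-d)) with hCdef
  have hC0 : 0 ≤ C := mul_nonneg (Real.rpow_nonneg hr.le _) (Real.exp_nonneg _)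
  have hbase : IntervalIntegrable (fun u : ℝ => C * u ^ ((1:ℝ)/2 - 1)) volume 0 r :=
    (intervalIntegral.intervalIntegrable_rpow' (by norm_num)).const_mul C
  have hcomp : IntervalIntegrable (fun x : ℝ => C * (r - x) ^ ((1:ℝ)/2 - 1)) volume 0 r := by
    have := (hbase.comp_sub_left r).symm
    simpa using this
  apply hcomp.mono_fun
  · apply Measurable.aestronglyMeasurable
    fun_prop
  · rw [uIoc_of_le hr.le]
    refine (ae_restrict_iff' measurableSet_Ioc).2 (ae_of_all _ fun x hx => ?_)
    have hx0 : 0 < x := hx.1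
    have hxr : x ≤ r := hx.2
    have hfx0 : 0 ≤ x ^ γ * Real.exp (-𝒟 * x ^ (-d)) / Real.sqrt (r - x) := by positivity
    have hrx : 0 ≤ r - x := by linarith
    simp only []
    rw [Real.norm_of_nonneg hfx0, Real.norm_of_nonneg (by positivity : (0:ℝ) ≤ C * (r - x) ^ ((1:ℝ)/2 - 1))]
    rw [div_sqrt_eq _ hrx]
    exact mul_le_mul_of_nonneg_right (hC x hx0 hxr) (Real.rpow_nonneg hrx _)




lemma sqrt_lambda_id {𝒟 d : ℝ} (h𝒟 : 0 < 𝒟) (hd : 0 < d) {ρ : ℝ} (hρ : 0 < ρ) :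
    (1 / (𝒟*d*ρ^(-d-1))) ^ ((1:ℝ)/2) * Real.sqrt Real.pi
      = Real.sqrt (Real.pi/(𝒟*d)) * ρ ^ ((d+1)/2) := by
  have h𝒟d : 0 < 𝒟 * d := mul_pos h𝒟 hd
  have h1 : ρ ^ (-d-1) = (ρ ^ (d+1))⁻¹ := by
    rw [show -d-1 = -(d+1) by ring, Real.rpow_neg hρ.le]
  have h2 : (1:ℝ) / (𝒟*d*ρ^(-d-1)) = ρ ^ (d+1) / (𝒟*d) := by
    rw [h1]
    field_simp
  rw [h2, Real.div_rpow (Real.rpow_nonneg hρ.le _) h𝒟d.le,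
    Real.sqrt_eq_rpow, Real.sqrt_eq_rpow,
    Real.div_rpow Real.pi_pos.le h𝒟d.le, ← Real.rpow_mul hρ.le]
  have : (d+1) * (1/2) = (d+1)/2 := by ring
  rw [this]
  field_simp




/-- bound on the power factor on `[δr, r]`. -/
lemma pow_factor_le {γ δ r x : ℝ} (hδ0 : 0 < δ) (hδ1 : δ ≤ 1) (hr : 0 < r)
    (hx : δ * r ≤ x) (hxr : x ≤ r) :
    x ^ γ ≤ δ ^ (-|γ|) * r ^ γ := by
  have hδr : 0 < δ * r := mul_pos hδ0 hr
  have hx0 : 0 < x := hδr.trans_le hx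
  rcases le_or_gt 0 γ with hγ | hγ
  · have h1 : x ^ γ ≤ r ^ γ := Real.rpow_le_rpow hx0.le hxr hγ
    have h2 : (1:ℝ) ≤ δ ^ (-|γ|) :=
      Real.one_le_rpow_of_pos_of_le_one_of_nonpos hδ0 hδ1 (neg_nonpos.2 (abs_nonneg γ))
    nlinarith [Real.rpow_nonneg hr.le γ]
  · have habs : -|γ| = γ := by rw [abs_of_neg hγ]; ring
    have h1 : x ^ (-(-γ)) ≤ (δ*r) ^ (-(-γ)) := by
      have hyz : (δ*r) ^ (-γ) ≤ x ^ (-γ) := Real.rpow_le_rpow hδr.le hx (by linarith)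
      rw [Real.rpow_neg hx0.le, Real.rpow_neg hδr.le]
      exact inv_anti₀ (Real.rpow_pos_of_pos hδr _) hyz
    rw [neg_neg] at h1
    calc x ^ γ ≤ (δ*r) ^ γ := h1
      _ = δ ^ γ * r ^ γ := Real.mul_rpow hδ0.le hr.le
      _ = δ ^ (-|γ|) * r ^ γ := by rw [habs]

lemma pow_factor_ge {γ δ r x : ℝ} (hδ0 : 0 < δ) (hδ1 : δ ≤ 1) (hr : 0 < r)
    (hx : δ * r ≤ x) (hxr : x ≤ r) :
    δ ^ |γ| * r ^ γ ≤ x ^ γ := by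
  have hδr : 0 < δ * r := mul_pos hδ0 hr
  have hx0 : 0 < x := hδr.trans_le hx
  rcases le_or_gt 0 γ with hγ | hγ
  · have habs : |γ| = γ := abs_of_nonneg hγ
    calc δ ^ |γ| * r ^ γ = (δ*r) ^ γ := by rw [habs, ← Real.mul_rpow hδ0.le hr.le]
      _ ≤ x ^ γ := Real.rpow_le_rpow hδr.le hx hγ
  · have h1 : r ^ γ ≤ x ^ γ := by
      have hyz : x ^ (-γ) ≤ r ^ (-γ) := Real.rpow_le_rpow hx0.le hxr (by linarith)
      rw [show γ = -(-γ) by ring, Real.rpow_neg hx0.le, Real.rpow_neg hr.le]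
      exact inv_anti₀ (Real.rpow_pos_of_pos hx0 _) hyz
    have h2 : δ ^ |γ| ≤ 1 := Real.rpow_le_one hδ0.le hδ1 (abs_nonneg γ)
    nlinarith [Real.rpow_nonneg hr.le γ, Real.rpow_pos_of_pos hx0 γ]

/-- Upper estimate. -/
lemma upper_est {𝒟 d γ δ r : ℝ} (h𝒟 : 0 < 𝒟) (hd : 0 < d) (hδ0 : 0 < δ) (hδ1 : δ < 1)
    (hr : 0 < r) (hsmall : r ^ d * (1 + |γ|) ≤ 𝒟 * d) :
    (∫ x in (0:ℝ)..r, x ^ γ * Real.exp (-𝒟 * x ^ (-d)) / Real.sqrt (r - x))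
      ≤ δ ^ (-|γ|) * (Real.sqrt (Real.pi/(𝒟*d)) * r ^ (γ+(d+1)/2) * Real.exp (-𝒟 * r ^ (-d)))
        + ((δ*r) ^ γ * Real.exp (-𝒟 * (δ*r) ^ (-d)) / Real.sqrt ((1-δ)*r)) * (δ*r) := by
  have hδr : 0 < δ * r := mul_pos hδ0 hr
  have hδrr : δ * r ≤ r := by nlinarith
  have hCmono : ∀ x : ℝ, 0 < x → x ≤ r →
      x ^ γ * Real.exp (-𝒟 * x ^ (-d)) ≤ r ^ γ * Real.exp (-𝒟 * r ^ (-d)) :=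
    fun x hx hxr => g_mono h𝒟 hd hx hxr hsmall
  have hint : IntervalIntegrable
      (fun x => x ^ γ * Real.exp (-𝒟 * x ^ (-d)) / Real.sqrt (r - x)) volume 0 r :=
    f_integrable hd hr hCmono
  have huIcc1 : uIcc 0 (δ*r) ⊆ uIcc 0 r := by
    rw [uIcc_of_le hδr.le, uIcc_of_le hr.le]
    exact Icc_subset_Icc le_rfl hδrr
  have huIcc2 : uIcc (δ*r) r ⊆ uIcc 0 r := by
    rw [uIcc_of_le hδrr, uIcc_of_le hr.le]
    exact Icc_subset_Icc hδr.le le_rfl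
  have hint1 := hint.mono_set huIcc1
  have hint2 := hint.mono_set huIcc2
  rw [← intervalIntegral.integral_add_adjacent_intervals hint1 hint2]
  -- tail bound
  set Ct : ℝ := (δ*r) ^ γ * Real.exp (-𝒟 * (δ*r) ^ (-d)) / Real.sqrt ((1-δ)*r) with hCt
  have h1δr : 0 < (1-δ)*r := mul_pos (by linarith) hr
  have htail : (∫ x in (0:ℝ)..(δ*r), x ^ γ * Real.exp (-𝒟 * x ^ (-d)) / Real.sqrt (r - x))
      ≤ Ct * (δ*r) := by
    rw [intervalIntegral.integral_of_le hδr.le]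
    have hconst : (∫ _x in Ioc (0:ℝ) (δ*r), Ct) = Ct * (δ*r) := by
      rw [setIntegral_const, measureReal_def, Real.volume_Ioc, smul_eq_mul,
        ENNReal.toReal_ofReal (by linarith), sub_zero, mul_comm]
    rw [← hconst]
    refine setIntegral_mono_on
      ((intervalIntegrable_iff_integrableOn_Ioc_of_le hδr.le).1 hint1)
      (integrableOn_const (by rw [Real.volume_Ioc]; exact ENNReal.ofReal_ne_top))
      measurableSet_Ioc fun x hx => ?_
    have hx0 : 0 < x := hx.1
    have hxδr : x ≤ δ*r := hx.2
    have hsmallδ : (δ*r) ^ d * (1 + |γ|) ≤ 𝒟 * d := by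
      have : (δ*r) ^ d ≤ r ^ d := Real.rpow_le_rpow hδr.le hδrr hd.le
      nlinarith [abs_nonneg γ]
    have hnum : x ^ γ * Real.exp (-𝒟 * x ^ (-d))
        ≤ (δ*r) ^ γ * Real.exp (-𝒟 * (δ*r) ^ (-d)) := g_mono h𝒟 hd hx0 hxδr hsmallδ
    have hden : Real.sqrt ((1-δ)*r) ≤ Real.sqrt (r - x) :=
      Real.sqrt_le_sqrt (by nlinarith)
    exact div_le_div₀ (mul_nonneg (Real.rpow_nonneg hδr.le _) (Real.exp_nonneg _)) hnum
      (Real.sqrt_pos.2 h1δr) hden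
  -- main bound
  set l : ℝ := 𝒟 * d * r ^ (-d-1) with hl
  have hlpos : 0 < l := by
    have := Real.rpow_pos_of_pos hr (-d-1)
    positivity
  set cB : ℝ := δ ^ (-|γ|) * (r ^ γ * Real.exp (-𝒟 * r ^ (-d))) with hcB
  have hcB0 : 0 ≤ cB := by positivity
  have hmain : (∫ x in (δ*r)..r, x ^ γ * Real.exp (-𝒟 * x ^ (-d)) / Real.sqrt (r - x))
      ≤ cB * ((1/l) ^ ((1:ℝ)/2) * Real.sqrt Real.pi) := by
    have hφint : IntervalIntegrable
        (fun u : ℝ => u ^ ((1:ℝ)/2 - 1) * Real.exp (-(l * u))) volume 0 (r - δ*r) :=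
      (intervalIntegrable_iff_integrableOn_Ioc_of_le (by linarith)).2
        ((gamma_integrable hlpos).mono_set Ioc_subset_Ioi_self)
    have hBint : IntervalIntegrable
        (fun x : ℝ => cB * ((r - x) ^ ((1:ℝ)/2 - 1) * Real.exp (-(l * (r - x)))))
        volume (δ*r) r := by
      have h := (hφint.comp_sub_left r).symm
      simp only [sub_sub_cancel, sub_zero] at h
      exact h.const_mul cB
    have hle : ∀ x ∈ Icc (δ*r) r,
        x ^ γ * Real.exp (-𝒟 * x ^ (-d)) / Real.sqrt (r - x)
          ≤ cB * ((r - x) ^ ((1:ℝ)/2 - 1) * Real.exp (-(l * (r - x)))) := by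
      intro x hx
      have hx0 : 0 < x := hδr.trans_le hx.1
      have hrx : 0 ≤ r - x := by linarith [hx.2]
      rw [div_sqrt_eq _ hrx]
      have hgle : x ^ γ * Real.exp (-𝒟 * x ^ (-d))
          ≤ cB * Real.exp (-(l * (r - x))) := by
        have hpow := pow_factor_le (γ := γ) hδ0 hδ1.le hr hx.1 hx.2
        have hexp : Real.exp (-𝒟 * x ^ (-d))
            ≤ Real.exp (-𝒟 * r ^ (-d)) * Real.exp (-(l * (r - x))) := by
          rw [← Real.exp_add]
          apply Real.exp_le_exp.2
          have := conv_lower hd hx0 hx.2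
          nlinarith
        calc x ^ γ * Real.exp (-𝒟 * x ^ (-d))
            ≤ (δ ^ (-|γ|) * r ^ γ) * (Real.exp (-𝒟 * r ^ (-d)) * Real.exp (-(l * (r - x)))) := by
              apply mul_le_mul hpow hexp (Real.exp_nonneg _)
              positivity
          _ = cB * Real.exp (-(l * (r - x))) := by rw [hcB]; ring
      calc x ^ γ * Real.exp (-𝒟 * x ^ (-d)) * (r-x) ^ ((1:ℝ)/2 - 1)
          ≤ (cB * Real.exp (-(l * (r - x)))) * (r-x) ^ ((1:ℝ)/2 - 1) :=
            mul_le_mul_of_nonneg_right hgle (Real.rpow_nonneg hrx _)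
        _ = cB * ((r - x) ^ ((1:ℝ)/2 - 1) * Real.exp (-(l * (r - x)))) := by ring
    calc (∫ x in (δ*r)..r, x ^ γ * Real.exp (-𝒟 * x ^ (-d)) / Real.sqrt (r - x))
        ≤ ∫ x in (δ*r)..r, cB * ((r - x) ^ ((1:ℝ)/2 - 1) * Real.exp (-(l * (r - x)))) :=
          intervalIntegral.integral_mono_on hδrr hint2 hBint hle
      _ = cB * ∫ x in (δ*r)..r, ((r - x) ^ ((1:ℝ)/2 - 1) * Real.exp (-(l * (r - x)))) :=
          intervalIntegral.integral_const_mul _ _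
      _ = cB * ∫ u in (0:ℝ)..(r - δ*r), u ^ ((1:ℝ)/2 - 1) * Real.exp (-(l * u)) := by
          rw [intervalIntegral.integral_comp_sub_left
            (fun u : ℝ => u ^ ((1:ℝ)/2 - 1) * Real.exp (-(l * u))) r, sub_self]
      _ ≤ cB * ((1/l) ^ ((1:ℝ)/2) * Real.sqrt Real.pi) := by
          apply mul_le_mul_of_nonneg_left _ hcB0
          rw [intervalIntegral.integral_of_le (by linarith : (0:ℝ) ≤ r - δ*r)]
          exact int_Ioc_le hlpos _
  -- identity
  have hid : cB * ((1/l) ^ ((1:ℝ)/2) * Real.sqrt Real.pi)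
      = δ ^ (-|γ|) * (Real.sqrt (Real.pi/(𝒟*d)) * r ^ (γ+(d+1)/2) * Real.exp (-𝒟 * r ^ (-d))) := by
    rw [hcB, hl, sqrt_lambda_id h𝒟 hd hr, Real.rpow_add hr]
    ring
  rw [hid] at hmain
  linarith


/-- Lower estimate. -/
lemma lower_est {𝒟 d γ δ r : ℝ} (h𝒟 : 0 < 𝒟) (hd : 0 < d) (hδ0 : 0 < δ) (hδ1 : δ < 1)
    (hr : 0 < r) (hsmall : r ^ d * (1 + |γ|) ≤ 𝒟 * d) :
    δ ^ (|γ|+(d+1)/2)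
        * (Real.sqrt (Real.pi/(𝒟*d)) * r ^ (γ+(d+1)/2) * Real.exp (-𝒟 * r ^ (-d)))
        * (1 - Real.sqrt 2 * Real.exp (-(𝒟 * d * (δ*r) ^ (-d-1) * ((1-δ)*r))/2))
      ≤ ∫ x in (0:ℝ)..r, x ^ γ * Real.exp (-𝒟 * x ^ (-d)) / Real.sqrt (r - x) := by
  have hδr : 0 < δ * r := mul_pos hδ0 hr
  have hδrr : δ * r ≤ r := by nlinarith
  set l : ℝ := 𝒟 * d * (δ*r) ^ (-d-1) with hl
  have hlpos : 0 < l := by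
    have := Real.rpow_pos_of_pos hδr (-d-1)
    positivity
  set S : ℝ := (1-δ)*r with hS
  have hSpos : 0 < S := mul_pos (by linarith) hr
  have hSeq : r - δ*r = S := by rw [hS]; ring
  set cB : ℝ := δ ^ |γ| * (r ^ γ * Real.exp (-𝒟 * r ^ (-d))) with hcB
  have hcB0 : 0 ≤ cB := by positivity
  -- integrability of f
  have hCmono : ∀ x : ℝ, 0 < x → x ≤ r →
      x ^ γ * Real.exp (-𝒟 * x ^ (-d)) ≤ r ^ γ * Real.exp (-𝒟 * r ^ (-d)) :=
    fun x hx hxr => g_mono h𝒟 hd hx hxr hsmall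
  have hint : IntervalIntegrable
      (fun x => x ^ γ * Real.exp (-𝒟 * x ^ (-d)) / Real.sqrt (r - x)) volume 0 r :=
    f_integrable hd hr hCmono
  have huIcc1 : uIcc 0 (δ*r) ⊆ uIcc 0 r := by
    rw [uIcc_of_le hδr.le, uIcc_of_le hr.le]
    exact Icc_subset_Icc le_rfl hδrr
  have huIcc2 : uIcc (δ*r) r ⊆ uIcc 0 r := by
    rw [uIcc_of_le hδrr, uIcc_of_le hr.le]
    exact Icc_subset_Icc hδr.le le_rfl
  have hint1 := hint.mono_set huIcc1
  have hint2 := hint.mono_set huIcc2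
  -- pointwise lower bound on [δr, r]
  have hle : ∀ x ∈ Icc (δ*r) r,
      cB * ((r - x) ^ ((1:ℝ)/2 - 1) * Real.exp (-(l * (r - x))))
        ≤ x ^ γ * Real.exp (-𝒟 * x ^ (-d)) / Real.sqrt (r - x) := by
    intro x hx
    have hx0 : 0 < x := hδr.trans_le hx.1
    have hrx : 0 ≤ r - x := by linarith [hx.2]
    rw [div_sqrt_eq _ hrx]
    have hgle : cB * Real.exp (-(l * (r - x)))
        ≤ x ^ γ * Real.exp (-𝒟 * x ^ (-d)) := by
      have hpow := pow_factor_ge (γ := γ) hδ0 hδ1.le hr hx.1 hx.2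
      have hexp : Real.exp (-𝒟 * r ^ (-d)) * Real.exp (-(l * (r - x)))
          ≤ Real.exp (-𝒟 * x ^ (-d)) := by
        rw [← Real.exp_add]
        apply Real.exp_le_exp.2
        have := conv_upper hd hδr hx.1 hx.2
        nlinarith
      calc cB * Real.exp (-(l * (r - x)))
          = (δ ^ |γ| * r ^ γ) * (Real.exp (-𝒟 * r ^ (-d)) * Real.exp (-(l * (r - x)))) := by
            rw [hcB]; ring
        _ ≤ x ^ γ * Real.exp (-𝒟 * x ^ (-d)) := by
            apply mul_le_mul hpow hexp (by positivity) (Real.rpow_nonneg hx0.le _)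
    calc cB * ((r - x) ^ ((1:ℝ)/2 - 1) * Real.exp (-(l * (r - x))))
        = (cB * Real.exp (-(l * (r - x)))) * (r - x) ^ ((1:ℝ)/2 - 1) := by ring
      _ ≤ x ^ γ * Real.exp (-𝒟 * x ^ (-d)) * (r - x) ^ ((1:ℝ)/2 - 1) :=
          mul_le_mul_of_nonneg_right hgle (Real.rpow_nonneg hrx _)
  -- integrability of lower bound function
  have hφint : IntervalIntegrable
      (fun u : ℝ => u ^ ((1:ℝ)/2 - 1) * Real.exp (-(l * u))) volume 0 (r - δ*r) :=
    (intervalIntegrable_iff_integrableOn_Ioc_of_le (by linarith)).2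
      ((gamma_integrable hlpos).mono_set Ioc_subset_Ioi_self)
  have hBint : IntervalIntegrable
      (fun x : ℝ => cB * ((r - x) ^ ((1:ℝ)/2 - 1) * Real.exp (-(l * (r - x)))))
      volume (δ*r) r := by
    have h := (hφint.comp_sub_left r).symm
    simp only [sub_sub_cancel, sub_zero] at h
    exact h.const_mul cB
  -- main chain
  have hmain : cB * ((1/l) ^ ((1:ℝ)/2) * Real.sqrt Real.pi
        - Real.exp (-(l * S)/2) * ((1/(l/2)) ^ ((1:ℝ)/2) * Real.sqrt Real.pi))
      ≤ ∫ x in (δ*r)..r, x ^ γ * Real.exp (-𝒟 * x ^ (-d)) / Real.sqrt (r - x) := by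
    calc cB * ((1/l) ^ ((1:ℝ)/2) * Real.sqrt Real.pi
          - Real.exp (-(l * S)/2) * ((1/(l/2)) ^ ((1:ℝ)/2) * Real.sqrt Real.pi))
        ≤ cB * ∫ t in Ioc (0:ℝ) S, t ^ ((1:ℝ)/2 - 1) * Real.exp (-(l * t)) :=
          mul_le_mul_of_nonneg_left (int_Ioc_ge hlpos hSpos) hcB0
      _ = cB * ∫ u in (0:ℝ)..(r - δ*r), u ^ ((1:ℝ)/2 - 1) * Real.exp (-(l * u)) := by
          rw [intervalIntegral.integral_of_le (by linarith : (0:ℝ) ≤ r - δ*r), hSeq]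
      _ = cB * ∫ x in (δ*r)..r, ((r - x) ^ ((1:ℝ)/2 - 1) * Real.exp (-(l * (r - x)))) := by
          rw [intervalIntegral.integral_comp_sub_left
            (fun u : ℝ => u ^ ((1:ℝ)/2 - 1) * Real.exp (-(l * u))) r, sub_self]
      _ = ∫ x in (δ*r)..r, cB * ((r - x) ^ ((1:ℝ)/2 - 1) * Real.exp (-(l * (r - x)))) :=
          (intervalIntegral.integral_const_mul _ _).symm
      _ ≤ ∫ x in (δ*r)..r, x ^ γ * Real.exp (-𝒟 * x ^ (-d)) / Real.sqrt (r - x) :=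
          intervalIntegral.integral_mono_on hδrr hBint hint2 hle
  -- tail nonneg
  have htail : (0:ℝ) ≤ ∫ x in (0:ℝ)..(δ*r), x ^ γ * Real.exp (-𝒟 * x ^ (-d)) / Real.sqrt (r - x) := by
    apply intervalIntegral.integral_nonneg hδr.le
    intro x hx
    apply div_nonneg _ (Real.sqrt_nonneg _)
    exact mul_nonneg (Real.rpow_nonneg hx.1 _) (Real.exp_nonneg _)
  -- identities
  have hA : cB * ((1/l) ^ ((1:ℝ)/2) * Real.sqrt Real.pi)
      = δ ^ (|γ|+(d+1)/2)
        * (Real.sqrt (Real.pi/(𝒟*d)) * r ^ (γ+(d+1)/2) * Real.exp (-𝒟 * r ^ (-d))) := by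
    rw [hcB, hl, sqrt_lambda_id h𝒟 hd hδr, Real.mul_rpow hδ0.le hr.le,
      Real.rpow_add hδ0, Real.rpow_add hr]
    ring
  have h2l : ((1:ℝ)/(l/2)) ^ ((1:ℝ)/2) = Real.sqrt 2 * (1/l) ^ ((1:ℝ)/2) := by
    rw [show (1:ℝ)/(l/2) = 2 * (1/l) by field_simp,
      Real.mul_rpow (by norm_num) (by positivity), Real.sqrt_eq_rpow]
  have hfinal : cB * ((1/l) ^ ((1:ℝ)/2) * Real.sqrt Real.pi
        - Real.exp (-(l * S)/2) * ((1/(l/2)) ^ ((1:ℝ)/2) * Real.sqrt Real.pi))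
      = δ ^ (|γ|+(d+1)/2)
        * (Real.sqrt (Real.pi/(𝒟*d)) * r ^ (γ+(d+1)/2) * Real.exp (-𝒟 * r ^ (-d)))
        * (1 - Real.sqrt 2 * Real.exp (-(l * S)/2)) := by
    rw [h2l, ← hA]
    ring
  rw [← intervalIntegral.integral_add_adjacent_intervals hint1 hint2]
  rw [hfinal] at hmain
  linarith



lemma final_arith {F G η ε Mδ err δa e₂ : ℝ} (hG : 0 < G) (hη0 : 0 < η) (hη1 : η ≤ 1/2)
    (hηε : η < ε) (hup : F ≤ Mδ * G + err * G) (hMδ : Mδ < 1 + η/2) (herr : err < η/2)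
    (hlo : δa * G * (1 - e₂) ≤ F) (hδa : 1 - η/2 < δa) (hδa0 : 0 ≤ δa) (he₂ : e₂ < η/2) :
    dist (F/G) 1 < ε := by
  have hup2 : F ≤ (1 + η) * G := by nlinarith
  have hlo2 : (1 - η) * G ≤ F := by
    have h1 : (1 - η/2) * (1 - η/2) ≤ δa * (1 - e₂) :=
      mul_le_mul hδa.le (by linarith) (by linarith) hδa0
    nlinarith
  rw [Real.dist_eq]
  have hdiv_up : F / G ≤ 1 + η := by
    rw [div_le_iff₀ hG]
    linarith
  have hdiv_lo : 1 - η ≤ F / G := by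
    rw [le_div_iff₀ hG]
    linarith
  have : |F / G - 1| ≤ η := abs_le.2 ⟨by linarith, by linarith⟩
  linarith


end AbelAux

open AbelAux MeasureTheory Set

/-- As `r → 0⁺`,
`∫₀^r x^γ exp(-𝒟 x^{-d}) (r-x)^{-1/2} dx ∼ √(π/(𝒟d)) r^{γ+(d+1)/2} exp(-𝒟 r^{-d})`. -/
theorem abel_integral_asymptotics
    (𝒟 d γ : ℝ) (h𝒟 : 0 < 𝒟) (hd : 0 < d) :
    Tendsto
      (fun r : ℝ =>
        (∫ x in (0:ℝ)..r, x ^ γ * Real.exp (-𝒟 * x ^ (-d)) / Real.sqrt (r - x)) /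
          (Real.sqrt (Real.pi / (𝒟 * d)) * r ^ (γ + (d + 1) / 2) *
            Real.exp (-𝒟 * r ^ (-d))))
      (nhdsWithin 0 (Set.Ioi 0)) (nhds 1) := by
  rw [Metric.tendsto_nhds]
  intro ε hε
  set η : ℝ := min ε 1 / 2 with hη
  have hη0 : 0 < η := by positivity
  have hη1 : η ≤ 1/2 := by
    rw [hη]
    have : min ε 1 ≤ 1 := min_le_right _ _
    linarith
  have hηε : η < ε := by
    rw [hη]
    have : min ε 1 ≤ ε := min_le_left _ _
    linarith
  -- choose δ
  have hne : (nhdsWithin (1:ℝ) (Ioo (0:ℝ) 1)).NeBot := by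
    apply mem_closure_iff_nhdsWithin_neBot.1
    rw [closure_Ioo (by norm_num : (0:ℝ) ≠ 1)]
    exact ⟨by norm_num, le_rfl⟩
  have hc1 : Tendsto (fun δ : ℝ => δ ^ (-|γ|)) (nhdsWithin (1:ℝ) (Ioo (0:ℝ) 1)) (nhds 1) := by
    have := (Real.continuousAt_rpow_const 1 (-|γ|) (Or.inl one_ne_zero)).tendsto
    rw [Real.one_rpow] at this
    exact this.mono_left nhdsWithin_le_nhds
  have hc2 : Tendsto (fun δ : ℝ => δ ^ (|γ|+(d+1)/2)) (nhdsWithin (1:ℝ) (Ioo (0:ℝ) 1)) (nhds 1) := by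
    have := (Real.continuousAt_rpow_const 1 (|γ|+(d+1)/2) (Or.inl one_ne_zero)).tendsto
    rw [Real.one_rpow] at this
    exact this.mono_left nhdsWithin_le_nhds
  obtain ⟨δ, hδb1, hδb2, hδmem⟩ :=
    ((hc1.eventually_lt_const (by linarith : (1:ℝ) < 1 + η/2)).and
      ((hc2.eventually_const_lt (by linarith : 1 - η/2 < (1:ℝ))).and self_mem_nhdsWithin)).exists
  have hδ0 : 0 < δ := hδmem.1
  have hδ1 : δ < 1 := hδmem.2
  -- constants for error terms
  have hδd1 : (1:ℝ) < δ ^ (-d) := by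
    rw [Real.one_lt_rpow_iff_of_pos hδ0]
    exact Or.inr ⟨hδ1, by linarith⟩
  set c₃ : ℝ := 𝒟 * (δ ^ (-d) - 1) with hc₃
  have hc₃0 : 0 < c₃ := by
    have := hδd1
    rw [hc₃]; nlinarith
  set c₄ : ℝ := 𝒟 * d * δ ^ (-d-1) * (1-δ) / 2 with hc₄
  have hc₄0 : 0 < c₄ := by
    have h1 := Real.rpow_pos_of_pos hδ0 (-d-1)
    have h2 : (0:ℝ) < 1 - δ := by linarith
    rw [hc₄]
    have h3 : 0 < 𝒟 * d * δ ^ (-d-1) * (1-δ) := by positivity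
    linarith
  set K : ℝ := δ ^ (γ+1) / (Real.sqrt (1-δ) * Real.sqrt (Real.pi/(𝒟*d))) with hK
  -- eventual facts
  have ev_small : ∀ᶠ r in nhdsWithin (0:ℝ) (Ioi 0), r ^ d * (1 + |γ|) ≤ 𝒟 * d := by
    have h0 : Tendsto (fun r : ℝ => r ^ d * (1 + |γ|)) (nhdsWithin (0:ℝ) (Ioi 0)) (nhds 0) := by
      have := (Real.continuousAt_rpow_const 0 d (Or.inr hd.le)).tendsto
      rw [Real.zero_rpow hd.ne'] at this
      have h'' : Tendsto (fun r : ℝ => r ^ d) (nhdsWithin (0:ℝ) (Ioi 0)) (nhds 0) :=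
        this.mono_left nhdsWithin_le_nhds
      simpa using h''.mul_const (1 + |γ|)
    exact (h0.eventually_lt_const (by positivity : (0:ℝ) < 𝒟 * d)).mono fun r h => h.le
  have ev_tail : ∀ᶠ r in nhdsWithin (0:ℝ) (Ioi 0),
      K * (r ^ (-(d/2)) * Real.exp (-(c₃ * r ^ (-d)))) < η/2 := by
    have h0 := (decay hd (-(d/2)) hc₃0).const_mul K
    rw [mul_zero] at h0
    exact h0.eventually_lt_const (by linarith)
  have ev_err : ∀ᶠ r in nhdsWithin (0:ℝ) (Ioi 0),
      Real.sqrt 2 * (r ^ (0:ℝ) * Real.exp (-(c₄ * r ^ (-d)))) < η/2 := by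
    have h0 := (decay hd 0 hc₄0).const_mul (Real.sqrt 2)
    rw [mul_zero] at h0
    exact h0.eventually_lt_const (by linarith)
  filter_upwards [self_mem_nhdsWithin, ev_small, ev_tail, ev_err] with r hr hsmall htail herr
  have hr0 : (0:ℝ) < r := hr
  set G : ℝ := Real.sqrt (Real.pi / (𝒟 * d)) * r ^ (γ + (d + 1) / 2) * Real.exp (-𝒟 * r ^ (-d))
    with hG
  have hGpos : 0 < G := by
    rw [hG]
    have h1 : 0 < Real.pi / (𝒟 * d) := by positivity
    have h2 : 0 < Real.sqrt (Real.pi / (𝒟 * d)) := Real.sqrt_pos.2 h1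
    positivity
  set F : ℝ := ∫ x in (0:ℝ)..r, x ^ γ * Real.exp (-𝒟 * x ^ (-d)) / Real.sqrt (r - x) with hF
  -- tail identity
  have hδr : 0 < δ * r := mul_pos hδ0 hr0
  have hTid : ((δ*r) ^ γ * Real.exp (-𝒟 * (δ*r) ^ (-d)) / Real.sqrt ((1-δ)*r)) * (δ*r)
      = (K * (r ^ (-(d/2)) * Real.exp (-(c₃ * r ^ (-d))))) * G := by
    have h1δ : (0:ℝ) < 1 - δ := by linarith
    have e1 : (δ*r) ^ γ = δ ^ γ * r ^ γ := Real.mul_rpow hδ0.le hr0.le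
    have e2 : (δ*r) ^ (-d) = δ ^ (-d) * r ^ (-d) := Real.mul_rpow hδ0.le hr0.le
    have e3 : Real.exp (-𝒟 * ((δ:ℝ) ^ (-d) * r ^ (-d)))
        = Real.exp (-(c₃ * r ^ (-d))) * Real.exp (-𝒟 * r ^ (-d)) := by
      rw [← Real.exp_add]
      congr 1
      rw [hc₃]; ring
    have e4 : Real.sqrt ((1-δ)*r) = Real.sqrt (1-δ) * r ^ ((1:ℝ)/2) := by
      rw [Real.sqrt_mul h1δ.le, Real.sqrt_eq_rpow, Real.sqrt_eq_rpow r]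
    have e5 : r ^ (γ + (d + 1) / 2) = r ^ γ * r ^ ((d+1)/2) := Real.rpow_add hr0 _ _
    have e6 : r ^ (-(d/2)) * r ^ ((d+1)/2) = r ^ ((1:ℝ)/2) := by
      rw [← Real.rpow_add hr0]
      congr 1
      ring
    have e7 : r ^ ((1:ℝ)/2) * r ^ ((1:ℝ)/2) = r := by
      rw [← Real.rpow_add hr0]
      norm_num
    have e8 : δ ^ (γ+1) = δ ^ γ * δ := by
      rw [Real.rpow_add hδ0, Real.rpow_one]
    have hsq : (0:ℝ) < Real.sqrt (1-δ) := Real.sqrt_pos.2 h1δ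
    have hsq2 : (0:ℝ) < Real.sqrt (Real.pi / (𝒟 * d)) := by
      have h1 : 0 < Real.pi / (𝒟 * d) := by positivity
      exact Real.sqrt_pos.2 h1
    have hrp : (0:ℝ) < r ^ ((1:ℝ)/2) := Real.rpow_pos_of_pos hr0 _
    have e9 : δ * r / (Real.sqrt (1-δ) * r ^ ((1:ℝ)/2))
        = δ * (r ^ (-(d/2)) * r ^ ((d+1)/2)) / Real.sqrt (1-δ) := by
      rw [e6, show δ * r = δ * (r ^ ((1:ℝ)/2) * r ^ ((1:ℝ)/2)) from by rw [e7]]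
      field_simp
    calc ((δ*r) ^ γ * Real.exp (-𝒟 * (δ*r) ^ (-d)) / Real.sqrt ((1-δ)*r)) * (δ*r)
        = (δ ^ γ * r ^ γ * (Real.exp (-(c₃ * r ^ (-d))) * Real.exp (-𝒟 * r ^ (-d))))
            * (δ * r / (Real.sqrt (1-δ) * r ^ ((1:ℝ)/2))) := by
          rw [e1, e2, e3, e4]; ring
      _ = (δ ^ γ * r ^ γ * (Real.exp (-(c₃ * r ^ (-d))) * Real.exp (-𝒟 * r ^ (-d))))
            * (δ * (r ^ (-(d/2)) * r ^ ((d+1)/2)) / Real.sqrt (1-δ)) := by rw [e9]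
      _ = K * (r ^ (-(d/2)) * Real.exp (-(c₃ * r ^ (-d)))) * G := by
          rw [hK, hG, e5, e8]
          field_simp
  -- error identity
  have hEid : -(𝒟 * d * (δ*r) ^ (-d-1) * ((1-δ)*r))/2 = -(c₄ * r ^ (-d)) := by
    have e1 : (δ*r) ^ (-d-1) = δ ^ (-d-1) * r ^ (-d-1) := Real.mul_rpow hδ0.le hr0.le
    have e2 : r ^ (-d-1) * r = r ^ (-d) := by
      nth_rewrite 2 [← Real.rpow_one r]
      rw [← Real.rpow_add hr0]
      norm_num
    rw [e1, hc₄]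
    linear_combination (-(𝒟 * d * δ ^ (-d-1) * (1-δ))/2) * e2
  -- assemble
  have hup := upper_est (γ := γ) h𝒟 hd hδ0 hδ1 hr0 hsmall
  have hlo := lower_est (γ := γ) h𝒟 hd hδ0 hδ1 hr0 hsmall
  rw [hTid] at hup
  rw [hEid] at hlo
  rw [← hF, ← hG] at hup hlo
  rw [Real.rpow_zero, one_mul] at herr
  clear_value F G
  exact final_arith hGpos hη0 hη1 hηε hup hδb1 htail hlo hδb2
    (Real.rpow_nonneg hδ0.le _) herr
end
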